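/- arXiv:2107.05875 — 9 statements merged into one kernel-verified Lean document; each statement's English description precedes it below -/
import Mathlib

section
/- In a Veldkamp n-gon, if vertices x and y are opposite (i.e., joined by a straight n-path) and z is a neighbor of y, then there exists a unique straight n-path from x to y whose penultimate vertex is z. -/
/-- A Veldkamp graph: a graph endowed, at each vertex `v`, with a symmetric
anti-reflexive "local opposition" relation `opp v` on the neighborhood of `v`
that is 2-plump. -/
structure VeldkampGraph (V : Type*) where
  adj : V → V → Prop
  adj_symm : ∀ u v, adj u v → adj v u
  adj_irrefl : ∀ v, ¬ adj v v
  opp : V → V → V → Prop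
  opp_adj_left : ∀ v x y, opp v x y → adj v x
  opp_adj_right : ∀ v x y, opp v x y → adj v y
  opp_symm : ∀ v x y, opp v x y → opp v y x
  opp_irrefl : ∀ v x, ¬ opp v x x
  plump2 : ∀ v x y, adj v x → adj v y → ∃ z, adj v z ∧ opp v z x ∧ opp v z y

namespace VeldkampGraph

variable {V : Type*} (Γ : VeldkampGraph V)

/-- `p 0, p 1, ..., p s` is an `s`-path. -/
def IsPath (s : ℕ) (p : ℕ → V) : Prop :=
  (∀ i, i < s → Γ.adj (p i) (p (i + 1))) ∧ ∀ i, i + 2 ≤ s → p i ≠ p (i + 2)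

/-- `p 0, ..., p s` is a straight `s`-path. -/
def IsStraight (s : ℕ) (p : ℕ → V) : Prop :=
  Γ.IsPath s p ∧ ∀ i, i + 2 ≤ s → Γ.opp (p (i + 1)) (p i) (p (i + 2))

/-- There is an `s`-path from `x` to `y`. -/
def HasPathLen (s : ℕ) (x y : V) : Prop :=
  ∃ p : ℕ → V, Γ.IsPath s p ∧ p 0 = x ∧ p s = y

/-- `dist (x, y) = k`. -/
def DistEq (x y : V) (k : ℕ) : Prop :=
  Γ.HasPathLen k x y ∧ ∀ j < k, ¬ Γ.HasPathLen j x y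

def Connected : Prop := ∀ x y : V, ∃ s, Γ.HasPathLen s x y

def Bipartite : Prop := ∃ P : Set V, ∀ u v, Γ.adj u v → (u ∈ P ↔ v ∉ P)

/-- A straight `m`-circuit, encoded as an `m`-periodic straight closed walk. -/
def IsClosedStraight (m : ℕ) (q : ℕ → V) : Prop :=
  (∀ i, Γ.adj (q i) (q (i + 1))) ∧ (∀ i, Γ.opp (q (i + 1)) (q i) (q (i + 2))) ∧
    ∀ i, q (i + m) = q i

/-- An `m`-circuit: an `m`-periodic closed walk through `m` distinct vertices. -/
def IsCircuit (m : ℕ) (q : ℕ → V) : Prop :=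
  (∀ i, Γ.adj (q i) (q (i + 1))) ∧ (∀ i, q (i + m) = q i) ∧
    ∀ i j, i < m → j < m → q i = q j → i = j

end VeldkampGraph

/-- A Veldkamp `n`-gon. -/
structure VeldkampNGon (V : Type*) (n : ℕ) extends VeldkampGraph V where
  two_le : 2 ≤ n
  connected : toVeldkampGraph.Connected
  bipartite : toVeldkampGraph.Bipartite
  vp2 : ∀ k, 1 ≤ k → k ≤ n - 1 → ∀ p j q, toVeldkampGraph.IsStraight k p →
    j ≤ k → toVeldkampGraph.IsStraight j q → q 0 = p 0 → q j = p k →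
    j = k ∧ ∀ i ≤ k, q i = p i
  vp3 : ∀ p, toVeldkampGraph.IsStraight (n + 1) p →
    ∃ q, toVeldkampGraph.IsClosedStraight (2 * n) q ∧ ∀ i ≤ n + 1, q i = p i

namespace VeldkampNGon

variable {V : Type*} {n : ℕ} (Γ : VeldkampNGon V n)

/-- Two vertices are opposite if there is a root (straight `n`-path) from one
to the other. -/
def Opp (x y : V) : Prop :=
  ∃ p, Γ.IsStraight n p ∧ p 0 = x ∧ p n = y

/-- The set of vertices opposite `x`. -/
def opSet (x : V) : Set V := {y | Γ.Opp x y}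

/-- Two edges are opposite if some straight `(n+1)`-path has them as its first
and last edges. -/
def EdgeOpp (e f : Sym2 V) : Prop :=
  ∃ p, Γ.IsStraight (n + 1) p ∧ s(p 0, p 1) = e ∧ s(p n, p (n + 1)) = f

end VeldkampNGon

lemma VeldkampGraph.straight_mono {V : Type*} (Γ : VeldkampGraph V) {s t : ℕ}
    (h : t ≤ s) {p : ℕ → V} (hp : Γ.IsStraight s p) : Γ.IsStraight t p :=
  ⟨⟨fun i hi => hp.1.1 i (lt_of_lt_of_le hi h),
    fun i hi => hp.1.2 i (le_trans hi h)⟩,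
    fun i hi => hp.2 i (le_trans hi h)⟩

/-- Flipping lemma: if `p` is a root from `x` to `y` and `w` is a neighbor
of `y` opposite (at `y`) to the penultimate vertex of `p`, then there is a
root from `x` to `y` with penultimate vertex `w`. -/
lemma VeldkampNGon.flip {V : Type*} {m : ℕ} (Γ : VeldkampNGon V (m + 2))
    (y w : V) (p : ℕ → V) (hp : Γ.IsStraight (m + 2) p) (hny : p (m + 2) = y)
    (hw : Γ.opp y (p (m + 1)) w) :
    ∃ r, Γ.IsStraight (m + 2) r ∧ r 0 = p 0 ∧ r (m + 2) = y ∧ r (m + 1) = w := by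
  classical
  set p' : ℕ → V := fun i => if i ≤ m + 2 then p i else w with hp'def
  have hple : ∀ i, i ≤ m + 2 → p' i = p i := fun i hi => if_pos hi
  have hpw : p' (m + 3) = w := if_neg (by omega)
  have hadjyw : Γ.adj y w := Γ.opp_adj_right _ _ _ hw
  have hstraight : Γ.IsStraight (m + 2 + 1) p' := by
    refine ⟨⟨fun i hi => ?_, fun i hi => ?_⟩, fun i hi => ?_⟩
    · rcases Nat.lt_or_ge i (m + 2) with h | h
      · rw [hple i (by omega), hple (i + 1) (by omega)]
        exact hp.1.1 i h
      · have hi2 : i = m + 2 := by omega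
        subst hi2
        rw [hple (m + 2) le_rfl, hny, show m + 2 + 1 = m + 3 from rfl, hpw]
        exact hadjyw
    · rcases Nat.lt_or_ge (i + 2) (m + 3) with h | h
      · rw [hple i (by omega), hple (i + 2) (by omega)]
        exact hp.1.2 i (by omega)
      · have hi2 : i = m + 1 := by omega
        subst hi2
        rw [hple (m + 1) (by omega), show m + 1 + 2 = m + 3 from rfl, hpw]
        intro h'
        rw [h'] at hw
        exact Γ.opp_irrefl y w hw
    · rcases Nat.lt_or_ge (i + 2) (m + 3) with h | h
      · rw [hple i (by omega), hple (i + 1) (by omega), hple (i + 2) (by omega)]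
        exact hp.2 i (by omega)
      · have hi2 : i = m + 1 := by omega
        subst hi2
        rw [hple (m + 1) (by omega), hple (m + 1 + 1) (by omega),
          show m + 1 + 2 = m + 3 from rfl, hpw]
        have e : p (m + 1 + 1) = y := hny
        rw [e]
        exact hw
  obtain ⟨c, hc, hcp⟩ := Γ.vp3 p' hstraight
  obtain ⟨hcadj, hcopp, hcper⟩ := hc
  refine ⟨fun i => c (2 * (m + 2) - i), ⟨⟨fun i hi => ?_, fun i hi => ?_⟩,
    fun i hi => ?_⟩, ?_, ?_, ?_⟩
  · show Γ.adj (c (2 * (m + 2) - i)) (c (2 * (m + 2) - (i + 1)))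
    have e1 : 2 * (m + 2) - i = (2 * (m + 2) - (i + 1)) + 1 := by omega
    rw [e1]
    exact Γ.adj_symm _ _ (hcadj _)
  · have e2 : 2 * (m + 2) - (i + 1) = (2 * (m + 2) - (i + 2)) + 1 := by omega
    have e3 : 2 * (m + 2) - i = (2 * (m + 2) - (i + 2)) + 2 := by omega
    intro h'
    have h'' : c (2 * (m + 2) - i) = c (2 * (m + 2) - (i + 2)) := h'
    have hoppc := hcopp (2 * (m + 2) - (i + 2))
    rw [← e2, ← e3] at hoppc
    rw [h''] at hoppc
    exact Γ.opp_irrefl _ _ hoppc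
  · show Γ.opp (c (2 * (m + 2) - (i + 1))) (c (2 * (m + 2) - i)) (c (2 * (m + 2) - (i + 2)))
    have e2 : 2 * (m + 2) - (i + 1) = (2 * (m + 2) - (i + 2)) + 1 := by omega
    have e3 : 2 * (m + 2) - i = (2 * (m + 2) - (i + 2)) + 2 := by omega
    rw [e2, e3]
    exact Γ.opp_symm _ _ _ (by have := hcopp (2 * (m + 2) - (i + 2)); rw [← e2, e2] at this; exact this)
  · show c (2 * (m + 2) - 0) = p 0
    have : c (0 + 2 * (m + 2)) = c 0 := hcper 0
    rw [show 2 * (m + 2) - 0 = 0 + 2 * (m + 2) from by omega, this,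
      hcp 0 (by omega), hple 0 (by omega)]
  · show c (2 * (m + 2) - (m + 2)) = y
    rw [show 2 * (m + 2) - (m + 2) = m + 2 from by omega, hcp (m + 2) (by omega),
      hple (m + 2) le_rfl, hny]
  · show c (2 * (m + 2) - (m + 1)) = w
    rw [show 2 * (m + 2) - (m + 1) = m + 3 from by omega, hcp (m + 3) (by omega), hpw]

/-- In a Veldkamp `n`-gon, if `x` and `y` are opposite and `z` is a neighbor
of `y`, then there is a unique root from `x` to `y` whose penultimate vertex
is `z`. -/
theorem stmt0 {V : Type*} {n : ℕ} (Γ : VeldkampNGon V n) (x y z : V)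
    (hxy : Γ.Opp x y) (hz : Γ.adj y z) :
    ∃ p : ℕ → V, (Γ.IsStraight n p ∧ p 0 = x ∧ p n = y ∧ p (n - 1) = z) ∧
      ∀ q : ℕ → V, Γ.IsStraight n q → q 0 = x → q n = y → q (n - 1) = z →
        ∀ i ≤ n, q i = p i := by
  obtain ⟨m, rfl⟩ : ∃ m, n = m + 2 := ⟨n - 2, by have := Γ.two_le; omega⟩
  have hsub : m + 2 - 1 = m + 1 := by omega
  obtain ⟨p, hp, hp0, hpn⟩ := hxy
  have hadjyp : Γ.adj y (p (m + 1)) := by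
    have h := hp.1.1 (m + 1) (by omega)
    have e : p (m + 1 + 1) = y := hpn
    rw [e] at h
    exact Γ.adj_symm _ _ h
  obtain ⟨w, hwadj, hw1, hw2⟩ := Γ.plump2 y (p (m + 1)) z hadjyp hz
  obtain ⟨r, hr, hr0, hrn, hrm⟩ := Γ.flip y w p hp hpn (Γ.opp_symm _ _ _ hw1)
  obtain ⟨s, hs, hs0, hsn, hsm⟩ := Γ.flip y z r hr hrn (by rw [hrm]; exact hw2)
  refine ⟨s, ⟨hs, by rw [hs0, hr0, hp0], hsn, by rw [hsub]; exact hsm⟩, ?_⟩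
  intro q hq hq0 hqn hqm1 i hi
  rw [hsub] at hqm1
  have key := Γ.vp2 (m + 1) (by omega) (by omega) s (m + 1) q
    (Γ.straight_mono (by omega) hs) le_rfl (Γ.straight_mono (by omega) hq)
    (by rw [hq0, hs0, hr0, hp0]) (by rw [hqm1, hsm])
  rcases Nat.lt_or_ge i (m + 2) with h | h
  · exact key.2 i (by omega)
  · have : i = m + 2 := by omega
    subst this
    rw [hqn, hsn]
end

section
/- In a Veldkamp n-gon, for any two edges e_1 and e_2 there exists an edge opposite to both of them. -/
namespace VeldkampGraph

variable {V : Type*} (Γ : VeldkampGraph V)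

theorem isStraight_reverse {s : ℕ} {p : ℕ → V} (h : Γ.IsStraight s p) :
    Γ.IsStraight s (fun i => p (s - i)) := by
  obtain ⟨⟨hadj, hne⟩, hopp⟩ := h
  refine ⟨⟨fun i hi => ?_, fun i hi => ?_⟩, fun i hi => ?_⟩
  · show Γ.adj (p (s - i)) (p (s - (i + 1)))
    rw [show s - i = (s - (i + 1)) + 1 by omega]
    exact Γ.adj_symm _ _ (hadj _ (by omega))
  · show p (s - i) ≠ p (s - (i + 2))
    rw [show s - i = (s - (i + 2)) + 2 by omega]
    exact (hne _ (by omega)).symm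
  · show Γ.opp (p (s - (i + 1))) (p (s - i)) (p (s - (i + 2)))
    rw [show s - i = (s - (i + 2)) + 2 by omega,
      show s - (i + 1) = (s - (i + 2)) + 1 by omega]
    exact Γ.opp_symm _ _ _ (hopp _ (by omega))

theorem extend_one {s : ℕ} {p : ℕ → V} (hs : 1 ≤ s) (h : Γ.IsStraight s p) :
    ∃ q, Γ.IsStraight (s + 1) q ∧ ∀ i ≤ s, q i = p i := by
  obtain ⟨⟨hadj, hne⟩, hopp⟩ := h
  have ha : Γ.adj (p s) (p (s - 1)) := by
    have h1 := hadj (s - 1) (by omega)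
    rw [show s - 1 + 1 = s by omega] at h1
    exact Γ.adj_symm _ _ h1
  obtain ⟨z, hzadj, hz1, -⟩ := Γ.plump2 (p s) (p (s - 1)) (p (s - 1)) ha ha
  refine ⟨fun i => if i ≤ s then p i else z,
    ⟨⟨fun i hi => ?_, fun i hi => ?_⟩, fun i hi => ?_⟩, fun i hi => by simp [hi]⟩
  · by_cases hc : i < s
    · show Γ.adj (if i ≤ s then p i else z) (if i + 1 ≤ s then p (i + 1) else z)
      rw [if_pos (by omega), if_pos (by omega)]
      exact hadj i hc
    · have hi' : i = s := by omega
      subst hi'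
      show Γ.adj (if i ≤ i then p i else z) (if i + 1 ≤ i then p (i + 1) else z)
      rw [if_pos le_rfl, if_neg (by omega)]
      exact hzadj
  · by_cases hc : i + 2 ≤ s
    · show (if i ≤ s then p i else z) ≠ (if i + 2 ≤ s then p (i + 2) else z)
      rw [if_pos (by omega), if_pos hc]
      exact hne i hc
    · have hi' : i = s - 1 := by omega
      subst hi'
      show (if s - 1 ≤ s then p (s - 1) else z) ≠ (if s - 1 + 2 ≤ s then p (s - 1 + 2) else z)
      rw [if_pos (by omega), if_neg (by omega)]
      intro he
      rw [he] at hz1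
      exact Γ.opp_irrefl _ _ hz1
  · by_cases hc : i + 2 ≤ s
    · show Γ.opp (if i + 1 ≤ s then p (i + 1) else z) (if i ≤ s then p i else z)
        (if i + 2 ≤ s then p (i + 2) else z)
      rw [if_pos (by omega), if_pos (by omega), if_pos hc]
      exact hopp i hc
    · have hi' : i = s - 1 := by omega
      subst hi'
      show Γ.opp (if s - 1 + 1 ≤ s then p (s - 1 + 1) else z) (if s - 1 ≤ s then p (s - 1) else z)
        (if s - 1 + 2 ≤ s then p (s - 1 + 2) else z)
      rw [show s - 1 + 1 = s by omega, if_pos le_rfl, if_pos (by omega), if_neg (by omega)]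
      exact Γ.opp_symm _ _ _ hz1

theorem extend_to {s : ℕ} {p : ℕ → V} (L : ℕ) (hs : 1 ≤ s) (hL : s ≤ L)
    (h : Γ.IsStraight s p) : ∃ q, Γ.IsStraight L q ∧ ∀ i ≤ s, q i = p i := by
  induction L, hL using Nat.le_induction with
  | base => exact ⟨p, h, fun _ _ => rfl⟩
  | succ L hL ih =>
    obtain ⟨q, hq, hqe⟩ := ih
    obtain ⟨q', hq', hq'e⟩ := Γ.extend_one (by omega) hq
    exact ⟨q', hq', fun i hi => (hq'e i (by omega)).trans (hqe i hi)⟩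

end VeldkampGraph

namespace VeldkampNGon

variable {V : Type*} {n : ℕ} (Γ : VeldkampNGon V n)

/-- Attach a fresh vertex `ξ` to the antipode `u = C (n+1)` of a straight
`2n`-circuit, yielding a straight `(n+1)`-path `ξ, C (n+1), C (n+2), ..., C (2n+1)`. -/
theorem attach {C : ℕ → V} (hCadj : ∀ i, Γ.adj (C i) (C (i + 1)))
    (hCopp : ∀ i, Γ.opp (C (i + 1)) (C i) (C (i + 2)))
    (hCper : ∀ i, C (i + 2 * n) = C i) {u ξ : V} (hu : C (n + 1) = u)
    (hξadj : Γ.adj u ξ) (hξ : Γ.opp u ξ (C (n + 2))) :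
    Γ.IsStraight (n + 1) (fun i => if i = 0 then ξ else C (n + i)) ∧
      (fun i : ℕ => if i = 0 then ξ else C (n + i)) 1 = u ∧
      (fun i : ℕ => if i = 0 then ξ else C (n + i)) n = C 0 ∧
      (fun i : ℕ => if i = 0 then ξ else C (n + i)) (n + 1) = C 1 := by
  have hn := Γ.two_le
  refine ⟨⟨⟨fun i hi => ?_, fun i hi => ?_⟩, fun i hi => ?_⟩, ?_, ?_, ?_⟩
  · by_cases hc : i = 0
    · subst hc
      show Γ.adj (if (0 : ℕ) = 0 then ξ else C (n + 0)) (if (0 + 1 : ℕ) = 0 then ξ else C (n + (0 + 1)))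
      rw [if_pos rfl, if_neg (by omega), show n + (0 + 1) = n + 1 by omega, hu]
      exact Γ.adj_symm _ _ hξadj
    · show Γ.adj (if i = 0 then ξ else C (n + i)) (if i + 1 = 0 then ξ else C (n + (i + 1)))
      rw [if_neg hc, if_neg (by omega), show n + (i + 1) = (n + i) + 1 by omega]
      exact hCadj _
  · by_cases hc : i = 0
    · subst hc
      show (if (0 : ℕ) = 0 then ξ else C (n + 0)) ≠ (if (0 + 2 : ℕ) = 0 then ξ else C (n + (0 + 2)))
      rw [if_pos rfl, if_neg (by omega), show n + (0 + 2) = n + 2 by omega]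
      intro he
      rw [← he] at hξ
      exact Γ.opp_irrefl _ _ hξ
    · show (if i = 0 then ξ else C (n + i)) ≠ (if i + 2 = 0 then ξ else C (n + (i + 2)))
      rw [if_neg hc, if_neg (by omega), show n + (i + 2) = ((n + i) + 1) + 1 by omega]
      intro he
      have ho := hCopp (n + i)
      rw [show (n + i) + 2 = ((n + i) + 1) + 1 by omega, ← he] at ho
      exact Γ.opp_irrefl _ _ ho
  · by_cases hc : i = 0
    · subst hc
      show Γ.opp (if (0 + 1 : ℕ) = 0 then ξ else C (n + (0 + 1))) (if (0 : ℕ) = 0 then ξ else C (n + 0))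
        (if (0 + 2 : ℕ) = 0 then ξ else C (n + (0 + 2)))
      rw [if_pos rfl, if_neg (by omega), if_neg (by omega), show n + (0 + 1) = n + 1 by omega,
        show n + (0 + 2) = n + 2 by omega, hu]
      exact hξ
    · show Γ.opp (if i + 1 = 0 then ξ else C (n + (i + 1))) (if i = 0 then ξ else C (n + i))
        (if i + 2 = 0 then ξ else C (n + (i + 2)))
      rw [if_neg (by omega), if_neg hc, if_neg (by omega),
        show n + (i + 1) = (n + i) + 1 by omega, show n + (i + 2) = (n + i) + 2 by omega]
      exact hCopp _
  · show (if (1 : ℕ) = 0 then ξ else C (n + 1)) = u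
    rw [if_neg (by omega)]
    exact hu
  · show (if n = 0 then ξ else C (n + n)) = C 0
    rw [if_neg (by omega), show n + n = 0 + 2 * n by omega, hCper 0]
  · show (if n + 1 = 0 then ξ else C (n + (n + 1))) = C 1
    rw [if_neg (by omega), show n + (n + 1) = 1 + 2 * n by omega, hCper 1]

/-- The fan lemma: the far end of a straight `(n+1)`-path can be redirected to
any prescribed neighbour `z` of its `n`-th vertex, keeping the initial vertex. -/
theorem fan {Q : ℕ → V} (hQ : Γ.IsStraight (n + 1) Q) {z : V} (hz : Γ.adj (Q n) z) :
    ∃ R, Γ.IsStraight (n + 1) R ∧ R 0 = Q 0 ∧ R n = Q n ∧ R (n + 1) = z := by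
  have hn := Γ.two_le
  obtain ⟨⟨hadj, hne⟩, hopp⟩ := hQ
  have ha : Γ.adj (Q n) (Q (n - 1)) := by
    have h1 := hadj (n - 1) (by omega)
    rw [show n - 1 + 1 = n by omega] at h1
    exact Γ.adj_symm _ _ h1
  obtain ⟨w, hwadj, hw1, hw2⟩ := Γ.plump2 (Q n) (Q (n - 1)) z ha hz
  -- the modified path (Q 0, ..., Q n, w)
  have hstr : Γ.IsStraight (n + 1) (fun i => if i = n + 1 then w else Q i) := by
    refine ⟨⟨fun i hi => ?_, fun i hi => ?_⟩, fun i hi => ?_⟩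
    · by_cases hc : i < n
      · show Γ.adj (if i = n + 1 then w else Q i) (if i + 1 = n + 1 then w else Q (i + 1))
        rw [if_neg (by omega), if_neg (by omega)]
        exact hadj i (by omega)
      · have hi' : i = n := by omega
        subst hi'
        show Γ.adj (if i = i + 1 then w else Q i) (if i + 1 = i + 1 then w else Q (i + 1))
        rw [if_neg (by omega), if_pos rfl]
        exact hwadj
    · by_cases hc : i + 2 ≤ n
      · show (if i = n + 1 then w else Q i) ≠ (if i + 2 = n + 1 then w else Q (i + 2))
        rw [if_neg (by omega), if_neg (by omega)]
        exact hne i (by omega)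
      · have hi' : i = n - 1 := by omega
        subst hi'
        show (if n - 1 = n + 1 then w else Q (n - 1)) ≠ (if n - 1 + 2 = n + 1 then w else Q (n - 1 + 2))
        rw [if_neg (by omega), if_pos (by omega)]
        intro he
        rw [← he] at hw1
        exact Γ.opp_irrefl _ _ hw1
    · by_cases hc : i + 2 ≤ n
      · show Γ.opp (if i + 1 = n + 1 then w else Q (i + 1)) (if i = n + 1 then w else Q i)
          (if i + 2 = n + 1 then w else Q (i + 2))
        rw [if_neg (by omega), if_neg (by omega), if_neg (by omega)]
        exact hopp i (by omega)
      · have hi' : i = n - 1 := by omega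
        subst hi'
        show Γ.opp (if n - 1 + 1 = n + 1 then w else Q (n - 1 + 1)) (if n - 1 = n + 1 then w else Q (n - 1))
          (if n - 1 + 2 = n + 1 then w else Q (n - 1 + 2))
        rw [if_neg (by omega), if_neg (by omega), if_pos (by omega), show n - 1 + 1 = n by omega]
        exact Γ.opp_symm _ _ _ hw1
  obtain ⟨C, ⟨hCadj, hCopp, hCper⟩, hCeq⟩ := Γ.vp3 _ hstr
  have eC : ∀ i ≤ n + 1, C i = if i = n + 1 then w else Q i := hCeq
  have eC0 : C 0 = Q 0 := by rw [eC 0 (by omega), if_neg (by omega)]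
  have eCn : C n = Q n := by rw [eC n (by omega), if_neg (by omega)]
  have eCn1 : C (n + 1) = w := by rw [eC (n + 1) le_rfl, if_pos rfl]
  -- the path (z, Q n, w, C (n+2), ..., C (2n))
  have hRstr : Γ.IsStraight (n + 1) (fun i => if i = 0 then z else C (n - 1 + i)) := by
    refine ⟨⟨fun i hi => ?_, fun i hi => ?_⟩, fun i hi => ?_⟩
    · by_cases hc : i = 0
      · subst hc
        show Γ.adj (if (0 : ℕ) = 0 then z else C (n - 1 + 0)) (if (0 + 1 : ℕ) = 0 then z else C (n - 1 + (0 + 1)))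
        rw [if_pos rfl, if_neg (by omega), show n - 1 + (0 + 1) = n by omega, eCn]
        exact Γ.adj_symm _ _ hz
      · show Γ.adj (if i = 0 then z else C (n - 1 + i)) (if i + 1 = 0 then z else C (n - 1 + (i + 1)))
        rw [if_neg hc, if_neg (by omega), show n - 1 + (i + 1) = (n - 1 + i) + 1 by omega]
        exact hCadj _
    · by_cases hc : i = 0
      · subst hc
        show (if (0 : ℕ) = 0 then z else C (n - 1 + 0)) ≠ (if (0 + 2 : ℕ) = 0 then z else C (n - 1 + (0 + 2)))
        rw [if_pos rfl, if_neg (by omega), show n - 1 + (0 + 2) = n + 1 by omega, eCn1]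
        intro he
        rw [he] at hw2
        exact Γ.opp_irrefl _ _ hw2
      · show (if i = 0 then z else C (n - 1 + i)) ≠ (if i + 2 = 0 then z else C (n - 1 + (i + 2)))
        rw [if_neg hc, if_neg (by omega), show n - 1 + (i + 2) = ((n - 1 + i) + 1) + 1 by omega]
        intro he
        have ho := hCopp (n - 1 + i)
        rw [show (n - 1 + i) + 2 = ((n - 1 + i) + 1) + 1 by omega, ← he] at ho
        exact Γ.opp_irrefl _ _ ho
    · by_cases hc : i = 0
      · subst hc
        show Γ.opp (if (0 + 1 : ℕ) = 0 then z else C (n - 1 + (0 + 1))) (if (0 : ℕ) = 0 then z else C (n - 1 + 0))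
          (if (0 + 2 : ℕ) = 0 then z else C (n - 1 + (0 + 2)))
        rw [if_pos rfl, if_neg (by omega), if_neg (by omega), show n - 1 + (0 + 1) = n by omega,
          show n - 1 + (0 + 2) = n + 1 by omega, eCn, eCn1]
        exact Γ.opp_symm _ _ _ hw2
      · show Γ.opp (if i + 1 = 0 then z else C (n - 1 + (i + 1))) (if i = 0 then z else C (n - 1 + i))
          (if i + 2 = 0 then z else C (n - 1 + (i + 2)))
        rw [if_neg (by omega), if_neg hc, if_neg (by omega),
          show n - 1 + (i + 1) = (n - 1 + i) + 1 by omega,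
          show n - 1 + (i + 2) = (n - 1 + i) + 2 by omega]
        exact hCopp _
  refine ⟨fun i => (fun j => if j = 0 then z else C (n - 1 + j)) (n + 1 - i),
    VeldkampGraph.isStraight_reverse Γ.toVeldkampGraph hRstr, ?_, ?_, ?_⟩
  · show (if n + 1 - 0 = 0 then z else C (n - 1 + (n + 1 - 0))) = Q 0
    rw [if_neg (by omega), show n - 1 + (n + 1 - 0) = 0 + 2 * n by omega, hCper 0, eC0]
  · show (if n + 1 - n = 0 then z else C (n - 1 + (n + 1 - n))) = Q n
    rw [if_neg (by omega), show n - 1 + (n + 1 - n) = n by omega, eCn]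
  · show (if n + 1 - (n + 1) = 0 then z else C (n - 1 + (n + 1 - (n + 1)))) = z
    rw [if_pos (by omega)]

end VeldkampNGon

namespace VeldkampNGon

variable {V : Type*} {n : ℕ} (Γ : VeldkampNGon V n)

/-- The core lemma: given two straight `(n+1)`-paths `P`, `M` with the same
initial vertex, there is a vertex `ξ` adjacent to that initial vertex together
with straight `(n+1)`-paths from the edge `{ξ, P 0}` ending with the reversed
last edges of `P` and of `M` respectively. -/
theorem core {P M : ℕ → V} (hP : Γ.IsStraight (n + 1) P) (hM : Γ.IsStraight (n + 1) M)
    (h0 : P 0 = M 0) :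
    ∃ ξ X1 X2, Γ.adj ξ (P 0) ∧ Γ.IsStraight (n + 1) X1 ∧ Γ.IsStraight (n + 1) X2 ∧
      X1 0 = ξ ∧ X1 1 = P 0 ∧ X1 n = P (n + 1) ∧ X1 (n + 1) = P n ∧
      X2 0 = ξ ∧ X2 1 = P 0 ∧ X2 n = M (n + 1) ∧ X2 (n + 1) = M n := by
  have hn := Γ.two_le
  obtain ⟨C, ⟨hCadj, hCopp, hCper⟩, hCeq⟩ :=
    Γ.vp3 _ (VeldkampGraph.isStraight_reverse Γ.toVeldkampGraph hP)
  obtain ⟨D, ⟨hDadj, hDopp, hDper⟩, hDeq⟩ :=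
    Γ.vp3 _ (VeldkampGraph.isStraight_reverse Γ.toVeldkampGraph hM)
  have eC : ∀ i ≤ n + 1, C i = P (n + 1 - i) := hCeq
  have eD : ∀ i ≤ n + 1, D i = M (n + 1 - i) := hDeq
  have eCu : C (n + 1) = P 0 := by rw [eC (n + 1) le_rfl, Nat.sub_self]
  have eDu : D (n + 1) = P 0 := by rw [eD (n + 1) le_rfl, Nat.sub_self]; exact h0.symm
  have hadjC : Γ.adj (P 0) (C (n + 2)) := by
    have := hCadj (n + 1); rwa [eCu] at this
  have hadjD : Γ.adj (P 0) (D (n + 2)) := by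
    have := hDadj (n + 1); rwa [eDu] at this
  obtain ⟨ξ, hξadj, hξ1, hξ2⟩ := Γ.plump2 (P 0) (C (n + 2)) (D (n + 2)) hadjC hadjD
  obtain ⟨hX1s, hX11, hX1n, hX1n1⟩ := Γ.attach hCadj hCopp hCper eCu hξadj hξ1
  obtain ⟨hX2s, hX21, hX2n, hX2n1⟩ := Γ.attach hDadj hDopp hDper eDu hξadj hξ2
  refine ⟨ξ, _, _, Γ.adj_symm _ _ hξadj, hX1s, hX2s, if_pos rfl, hX11, ?_, ?_,
    if_pos rfl, hX21, ?_, ?_⟩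
  · rw [if_neg (show ¬(n = 0) by omega), show n + n = 0 + 2 * n by omega, hCper 0,
      eC 0 (by omega), Nat.sub_zero]
  · rw [if_neg (show ¬(n + 1 = 0) by omega), show n + (n + 1) = 1 + 2 * n by omega, hCper 1,
      eC 1 (by omega), show n + 1 - 1 = n by omega]
  · rw [if_neg (show ¬(n = 0) by omega), show n + n = 0 + 2 * n by omega, hDper 0,
      eD 0 (by omega), Nat.sub_zero]
  · rw [if_neg (show ¬(n + 1 = 0) by omega), show n + (n + 1) = 1 + 2 * n by omega, hDper 1,
      eD 1 (by omega), show n + 1 - 1 = n by omega]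

/-- The invariant carried along a walk: there are two straight `(n+1)`-paths
with a common initial vertex ending with (traversals of) the edges `{a, b}`
and `{x, y}` respectively. -/
def Inv (a b x y : V) : Prop :=
  ∃ P M : ℕ → V, Γ.IsStraight (n + 1) P ∧ Γ.IsStraight (n + 1) M ∧ P 0 = M 0 ∧
    s(P n, P (n + 1)) = s(a, b) ∧ s(M n, M (n + 1)) = s(x, y)

theorem inv_step {a b x y z : V} (h : Γ.Inv a b x y) (hz : Γ.adj y z) : Γ.Inv a b y z := by
  obtain ⟨P, M, hP, hM, h0, hPe, hMe⟩ := h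
  rcases Sym2.eq_iff.mp hMe with ⟨hmx, hmy⟩ | ⟨hmy, hmx⟩
  · -- M n = x, M (n+1) = y : use core to reverse the orientation, then fan
    obtain ⟨ξ, X1, X2, hξadj, hX1, hX2, e10, e11, e1n, e1n1, e20, e21, e2n, e2n1⟩ :=
      Γ.core hP hM h0
    have hz2 : Γ.adj (X2 n) z := by rw [e2n, hmy]; exact hz
    obtain ⟨R, hR, hR0, hRn, hRn1⟩ := Γ.fan hX2 hz2
    refine ⟨X1, R, hX1, hR, by rw [e10, hR0, e20], ?_, by rw [hRn, hRn1, e2n, hmy]⟩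
    rw [e1n, e1n1, Sym2.eq_swap]
    exact hPe
  · -- M n = y : fan directly
    have hz2 : Γ.adj (M n) z := by rw [hmy]; exact hz
    obtain ⟨R, hR, hR0, hRn, hRn1⟩ := Γ.fan hM hz2
    exact ⟨P, R, hP, hR, h0.trans hR0.symm, hPe, by rw [hRn, hRn1, hmy]⟩

theorem inv_base {a b : V} (hab : Γ.adj a b) : Γ.Inv a b a b := by
  have h1 : Γ.IsStraight 1 (fun i => if i = 0 then a else b) := by
    refine ⟨⟨fun i hi => ?_, fun i hi => by omega⟩, fun i hi => by omega⟩
    have hi' : i = 0 := by omega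
    subst hi'
    show Γ.adj (if (0 : ℕ) = 0 then a else b) (if (0 + 1 : ℕ) = 0 then a else b)
    rw [if_pos rfl, if_neg (by omega)]
    exact hab
  obtain ⟨q, hq, hqe⟩ := VeldkampGraph.extend_to Γ.toVeldkampGraph (n + 1) le_rfl (by omega) h1
  have hq0 : q 0 = a := by simpa using hqe 0 (by omega)
  have hq1 : q 1 = b := by simpa using hqe 1 (by omega)
  have hrev := VeldkampGraph.isStraight_reverse Γ.toVeldkampGraph hq
  have hend : s((fun i => q (n + 1 - i)) n, (fun i => q (n + 1 - i)) (n + 1)) = s(a, b) := by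
    show s(q (n + 1 - n), q (n + 1 - (n + 1))) = s(a, b)
    rw [show n + 1 - n = 1 by omega, Nat.sub_self, hq0, hq1, Sym2.eq_swap]
  exact ⟨_, _, hrev, hrev, rfl, hend, hend⟩

theorem inv_walk {a b : V} : ∀ (m : ℕ) (p : ℕ → V), (∀ i, i < m → Γ.adj (p i) (p (i + 1))) →
    ∀ x, Γ.Inv a b x (p 0) → ∃ x', Γ.Inv a b x' (p m) := by
  intro m
  induction m with
  | zero => exact fun p _ x h => ⟨x, h⟩
  | succ m ih =>
    intro p hadj x h
    have h1 : Γ.Inv a b (p 0) (p 1) := Γ.inv_step h (hadj 0 (by omega))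
    obtain ⟨x', hx'⟩ := ih (fun i => p (i + 1)) (fun i hi => hadj (i + 1) (by omega)) (p 0) h1
    exact ⟨x', hx'⟩

end VeldkampNGon


/-- In a Veldkamp `n`-gon, for any two edges `{a,b}` and `{c,d}` there exists
an edge opposite to both of them. -/
theorem stmt1 {V : Type*} {n : ℕ} (Γ : VeldkampNGon V n) (a b c d : V)
    (h1 : Γ.adj a b) (h2 : Γ.adj c d) :
    ∃ u v : V, Γ.adj u v ∧ Γ.EdgeOpp s(u, v) s(a, b) ∧ Γ.EdgeOpp s(u, v) s(c, d) := by
  obtain ⟨m, p, ⟨hpadj, -⟩, hp0, hpm⟩ := Γ.connected b c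
  have hstart : Γ.Inv a b a (p 0) := by rw [hp0]; exact Γ.inv_base h1
  obtain ⟨x', hx'⟩ := Γ.inv_walk m p hpadj a hstart
  rw [hpm] at hx'
  obtain ⟨P, M, hP, hM, h0, hPe, hMe⟩ := Γ.inv_step hx' h2
  obtain ⟨ξ, X1, X2, hξadj, hX1, hX2, e10, e11, e1n, e1n1, e20, e21, e2n, e2n1⟩ :=
    Γ.core hP hM h0
  refine ⟨ξ, P 0, hξadj, ⟨X1, hX1, by rw [e10, e11], ?_⟩, ⟨X2, hX2, by rw [e20, e21], ?_⟩⟩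
  · rw [e1n, e1n1, Sym2.eq_swap]
    exact hPe
  · rw [e2n, e2n1, Sym2.eq_swap]
    exact hMe
end

section
/- In a Veldkamp n-gon, if the local opposition relation is trivial at some vertex v, then it is trivial at every vertex at even distance from v; if moreover n is odd, the local opposition relation is trivial at every vertex. -/
/-- The local opposition relation at `v` is trivial. -/
def VeldkampGraph.TrivialAt {V : Type*} (Γ : VeldkampGraph V) (v : V) : Prop :=
  ∀ x y, Γ.adj v x → Γ.adj v y → x ≠ y → Γ.opp v x y

section Helpers

variable {V : Type*}

namespace VeldkampGraph

lemma mkStraight (G : VeldkampGraph V) {s : ℕ} {p : ℕ → V}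
    (ha : ∀ i, i < s → G.adj (p i) (p (i + 1)))
    (ho : ∀ i, i + 2 ≤ s → G.opp (p (i + 1)) (p i) (p (i + 2))) :
    G.IsStraight s p := by
  refine ⟨⟨ha, fun i hi h => ?_⟩, ho⟩
  have h2 := ho i hi
  rw [← h] at h2
  exact G.opp_irrefl _ _ h2

lemma straight_mono_s5 (G : VeldkampGraph V) {s t : ℕ} {p : ℕ → V}
    (h : G.IsStraight s p) (hts : t ≤ s) : G.IsStraight t p :=
  ⟨⟨fun i hi => h.1.1 i (lt_of_lt_of_le hi hts),
    fun i hi => h.1.2 i (le_trans hi hts)⟩,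
    fun i hi => h.2 i (le_trans hi hts)⟩

lemma straight_rev (G : VeldkampGraph V) {s : ℕ} {p : ℕ → V}
    (h : G.IsStraight s p) : G.IsStraight s (fun i => p (s - i)) := by
  apply mkStraight
  · intro i hi
    have h1 := h.1.1 (s - (i + 1)) (by omega)
    rw [show s - (i + 1) + 1 = s - i from by omega] at h1
    exact G.adj_symm _ _ h1
  · intro i hi
    have h1 := h.2 (s - (i + 2)) (by omega)
    rw [show s - (i + 2) + 1 = s - (i + 1) from by omega,
        show s - (i + 2) + 2 = s - i from by omega] at h1
    exact G.opp_symm _ _ _ h1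

lemma ext1' (G : VeldkampGraph V) {k : ℕ} (hk : 1 ≤ k) {p : ℕ → V} {z : V}
    (hp : G.IsStraight k p) (hadj : G.adj (p k) z) (hopp : G.opp (p k) z (p (k - 1))) :
    G.IsStraight (k + 1) (fun i => if i ≤ k then p i else z) := by
  apply mkStraight
  · intro i hi
    show G.adj (if i ≤ k then p i else z) (if i + 1 ≤ k then p (i + 1) else z)
    by_cases h1 : i < k
    · rw [if_pos (by omega : i ≤ k), if_pos (by omega : i + 1 ≤ k)]
      exact hp.1.1 i h1
    · rw [if_pos (by omega : i ≤ k), if_neg (by omega : ¬ i + 1 ≤ k),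
        show i = k from by omega]
      exact hadj
  · intro i hi
    show G.opp (if i + 1 ≤ k then p (i + 1) else z) (if i ≤ k then p i else z)
      (if i + 2 ≤ k then p (i + 2) else z)
    by_cases h1 : i + 2 ≤ k
    · rw [if_pos (by omega : i ≤ k), if_pos (by omega : i + 1 ≤ k), if_pos h1]
      exact hp.2 i h1
    · rw [if_pos (by omega : i ≤ k), if_pos (by omega : i + 1 ≤ k),
        if_neg h1, show i + 1 = k from by omega, show i = k - 1 from by omega]
      exact G.opp_symm _ _ _ hopp

lemma ext1 (G : VeldkampGraph V) {k : ℕ} (hk : 1 ≤ k) {p : ℕ → V}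
    (hp : G.IsStraight k p) :
    ∃ q, G.IsStraight (k + 1) q ∧ ∀ i ≤ k, q i = p i := by
  have hadj : G.adj (p k) (p (k - 1)) := by
    have h1 := hp.1.1 (k - 1) (by omega)
    rw [show k - 1 + 1 = k from by omega] at h1
    exact G.adj_symm _ _ h1
  obtain ⟨z, hz1, hz2, -⟩ := G.plump2 (p k) (p (k - 1)) (p (k - 1)) hadj hadj
  refine ⟨fun i => if i ≤ k then p i else z, ext1' G hk hp hz1 hz2, fun i hi => ?_⟩
  simp [hi]

lemma extendTo (G : VeldkampGraph V) {k : ℕ} (hk : 1 ≤ k) {p : ℕ → V}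
    (hp : G.IsStraight k p) {m : ℕ} (hkm : k ≤ m) :
    ∃ q, G.IsStraight m q ∧ ∀ i ≤ k, q i = p i := by
  induction m, hkm using Nat.le_induction with
  | base => exact ⟨p, hp, fun i _ => rfl⟩
  | succ m hm ih =>
      obtain ⟨q, hq, hag⟩ := ih
      obtain ⟨q', hq', hag'⟩ := ext1 G (by omega) hq
      exact ⟨q', hq', fun i hi => (hag' i (by omega)).trans (hag i hi)⟩

lemma closedSeg (G : VeldkampGraph V) {m : ℕ} {q : ℕ → V}
    (hq : G.IsClosedStraight m q) (a t : ℕ) :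
    G.IsStraight t (fun i => q (a + i)) := by
  apply mkStraight
  · intro i _
    exact hq.1 (a + i)
  · intro i _
    exact hq.2.1 (a + i)

end VeldkampGraph

end Helpers

namespace VeldkampNGon

variable {V : Type*} {n : ℕ}

/-- If `u` is opposite `v` (via a straight `n`-path), then for every neighbor `x`
of `u` there is a straight `n`-path from `u` to `v` whose second vertex is `x`. -/
lemma rootThrough (Γ : VeldkampNGon V n) {u v x : V} {r : ℕ → V}
    (hr : Γ.toVeldkampGraph.IsStraight n r) (hr0 : r 0 = u) (hrn : r n = v)
    (hx : Γ.adj u x) :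
    ∃ A : ℕ → V, Γ.toVeldkampGraph.IsStraight n A ∧ A 0 = u ∧ A 1 = x ∧ A n = v := by
  have hn : 2 ≤ n := Γ.two_le
  have hadj1 : Γ.adj u (r 1) := by
    have h1 := hr.1.1 0 (by omega); rwa [hr0] at h1
  obtain ⟨z, hz1, hz2, hz3⟩ := Γ.plump2 u (r 1) x hadj1 hx
  -- the reversed path r, extended by z
  have hrev : Γ.toVeldkampGraph.IsStraight n (fun i => r (n - i)) :=
    Γ.toVeldkampGraph.straight_rev hr
  have hadjz : Γ.adj ((fun i => r (n - i)) n) z := by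
    show Γ.adj (r (n - n)) z
    rw [Nat.sub_self, hr0]; exact hz1
  have hoppz : Γ.opp ((fun i => r (n - i)) n) z ((fun i => r (n - i)) (n - 1)) := by
    show Γ.opp (r (n - n)) z (r (n - (n - 1)))
    rw [Nat.sub_self, hr0, show n - (n - 1) = 1 from by omega]
    exact hz2
  have hs := Γ.toVeldkampGraph.ext1' (by omega : 1 ≤ n) hrev hadjz hoppz
  obtain ⟨C1, hC1, hag1⟩ := Γ.vp3 _ hs
  have hC1n : C1 n = u := by
    rw [hag1 n (by omega)]
    show (if n ≤ n then r (n - n) else z) = u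
    rw [if_pos le_rfl, Nat.sub_self, hr0]
  have hC1n1 : C1 (n + 1) = z := by
    rw [hag1 (n + 1) le_rfl]
    show (if n + 1 ≤ n then r (n - (n + 1)) else z) = z
    rw [if_neg (by omega)]
  have hC10 : C1 0 = v := by
    rw [hag1 0 (by omega)]
    show (if 0 ≤ n then r (n - 0) else z) = v
    rw [if_pos (by omega)]; exact hrn
  -- P2 = (x, u, z, T1, ..., T (n-2), v)
  have hP2 : Γ.toVeldkampGraph.IsStraight (n + 1)
      (fun i => if i = 0 then x else C1 (n + (i - 1))) := by
    apply VeldkampGraph.mkStraight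
    · intro i hi
      match i with
      | 0 =>
        show Γ.adj x (C1 (n + 0))
        rw [show n + 0 = n from rfl, hC1n]
        exact Γ.adj_symm _ _ hx
      | (j + 1) =>
        show Γ.adj (C1 (n + j)) (C1 (n + j + 1))
        exact hC1.1 (n + j)
    · intro i hi
      match i with
      | 0 =>
        show Γ.opp (C1 (n + 0)) x (C1 (n + 1))
        rw [show n + 0 = n from rfl, hC1n, hC1n1]
        exact Γ.opp_symm _ _ _ hz3
      | (j + 1) =>
        show Γ.opp (C1 (n + j + 1)) (C1 (n + j)) (C1 (n + j + 2))
        exact hC1.2.1 (n + j)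
  obtain ⟨C2, hC2, hag2⟩ := Γ.vp3 _ hP2
  -- A = reverse of the segment of C2 from n+1 to 2n+1
  have hA : Γ.toVeldkampGraph.IsStraight n (fun i => C2 (n + 1 + (n - i))) := by
    have h1 := Γ.toVeldkampGraph.closedSeg hC2 (n + 1) n
    exact Γ.toVeldkampGraph.straight_rev h1
  refine ⟨fun i => C2 (n + 1 + (n - i)), hA, ?_, ?_, ?_⟩
  · show C2 (n + 1 + (n - 0)) = u
    rw [show n + 1 + (n - 0) = 1 + 2 * n from by omega, hC2.2.2 1, hag2 1 (by omega)]
    show (if 1 = 0 then x else C1 (n + 0)) = u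
    rw [if_neg one_ne_zero, show n + 0 = n from rfl, hC1n]
  · show C2 (n + 1 + (n - 1)) = x
    rw [show n + 1 + (n - 1) = 0 + 2 * n from by omega, hC2.2.2 0, hag2 0 (by omega)]
    exact if_pos rfl
  · show C2 (n + 1 + (n - n)) = v
    rw [Nat.sub_self, show n + 1 + 0 = n + 1 from rfl, hag2 (n + 1) le_rfl]
    show (if n + 1 = 0 then x else C1 (n + (n + 1 - 1))) = v
    rw [if_neg (by omega), show n + (n + 1 - 1) = 0 + 2 * n from by omega,
      hC1.2.2 0, hC10]

/-- Triviality transports along roots. -/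
lemma transport (Γ : VeldkampNGon V n) {v w : V} {p : ℕ → V}
    (hv : Γ.toVeldkampGraph.TrivialAt v)
    (hp : Γ.toVeldkampGraph.IsStraight n p) (hp0 : p 0 = w) (hpn : p n = v) :
    Γ.toVeldkampGraph.TrivialAt w := by
  have hn : 2 ≤ n := Γ.two_le
  intro x y hx hy hxy
  obtain ⟨A, hA, hA0, hA1, hAn⟩ := rootThrough Γ hp hp0 hpn hx
  obtain ⟨B, hB, hB0, hB1, hBn⟩ := rootThrough Γ hp hp0 hpn hy
  have hne : A (n - 1) ≠ B (n - 1) := by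
    intro hEq
    have h12 := Γ.vp2 (n - 1) (by omega) le_rfl A (n - 1) B
      (Γ.toVeldkampGraph.straight_mono_s5 hA (by omega)) le_rfl
      (Γ.toVeldkampGraph.straight_mono_s5 hB (by omega))
      (by rw [hA0, hB0]) hEq.symm
    have h13 := h12.2 1 (by omega)
    rw [hA1, hB1] at h13
    exact hxy h13.symm
  have hvA : Γ.adj v (A (n - 1)) := by
    have h1 := hA.1.1 (n - 1) (by omega)
    rw [show n - 1 + 1 = n from by omega, hAn] at h1
    exact Γ.adj_symm _ _ h1
  have hvB : Γ.adj v (B (n - 1)) := by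
    have h1 := hB.1.1 (n - 1) (by omega)
    rw [show n - 1 + 1 = n from by omega, hBn] at h1
    exact Γ.adj_symm _ _ h1
  -- D = A followed by the reverse of B, a straight closed path of length 2n
  have hD : Γ.toVeldkampGraph.IsStraight (n + 1)
      (fun i => if i ≤ n then A i else B (2 * n - i)) := by
    apply VeldkampGraph.mkStraight
    · intro i hi
      show Γ.adj (if i ≤ n then A i else B (2 * n - i))
        (if i + 1 ≤ n then A (i + 1) else B (2 * n - (i + 1)))
      by_cases h1 : i < n
      · rw [if_pos (by omega : i ≤ n), if_pos (by omega : i + 1 ≤ n)]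
        exact hA.1.1 i h1
      · rw [if_pos (by omega : i ≤ n), if_neg (by omega : ¬ i + 1 ≤ n),
          show i = n from by omega, hAn, show 2 * n - (n + 1) = n - 1 from by omega]
        have h2 := hB.1.1 (n - 1) (by omega)
        rw [show n - 1 + 1 = n from by omega, hBn] at h2
        exact Γ.adj_symm _ _ h2
    · intro i hi
      show Γ.opp (if i + 1 ≤ n then A (i + 1) else B (2 * n - (i + 1)))
        (if i ≤ n then A i else B (2 * n - i))
        (if i + 2 ≤ n then A (i + 2) else B (2 * n - (i + 2)))
      by_cases h1 : i + 2 ≤ n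
      · rw [if_pos (by omega : i ≤ n), if_pos (by omega : i + 1 ≤ n), if_pos h1]
        exact hA.2 i h1
      · rw [if_pos (by omega : i ≤ n), if_pos (by omega : i + 1 ≤ n), if_neg h1,
          show i + 1 = n from by omega, show i = n - 1 from by omega,
          show 2 * n - (n - 1 + 2) = n - 1 from by omega, hAn]
        exact hv _ _ hvA hvB hne
  obtain ⟨C, hC, hag⟩ := Γ.vp3 _ hD
  -- compare the return path of C with the reverse of B
  have hq' : Γ.toVeldkampGraph.IsStraight (n - 1) (fun i => B (n - 1 - i)) := by
    apply VeldkampGraph.mkStraight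
    · intro i hi
      have h1 := hB.1.1 (n - 1 - (i + 1)) (by omega)
      rw [show n - 1 - (i + 1) + 1 = n - 1 - i from by omega] at h1
      exact Γ.adj_symm _ _ h1
    · intro i hi
      have h1 := hB.2 (n - 1 - (i + 2)) (by omega)
      rw [show n - 1 - (i + 2) + 1 = n - 1 - (i + 1) from by omega,
        show n - 1 - (i + 2) + 2 = n - 1 - i from by omega] at h1
      exact Γ.opp_symm _ _ _ h1
  have hp' : Γ.toVeldkampGraph.IsStraight (n - 1) (fun i => C (n + 1 + i)) :=
    Γ.toVeldkampGraph.closedSeg hC (n + 1) (n - 1)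
  have heq1 : (fun i => B (n - 1 - i)) 0 = (fun i => C (n + 1 + i)) 0 := by
    show B (n - 1 - 0) = C (n + 1 + 0)
    rw [show n - 1 - 0 = n - 1 from rfl, show n + 1 + 0 = n + 1 from rfl,
      hag (n + 1) le_rfl]
    show B (n - 1) = if n + 1 ≤ n then A (n + 1) else B (2 * n - (n + 1))
    rw [if_neg (by omega), show 2 * n - (n + 1) = n - 1 from by omega]
  have heq2 : (fun i => B (n - 1 - i)) (n - 1) = (fun i => C (n + 1 + i)) (n - 1) := by
    show B (n - 1 - (n - 1)) = C (n + 1 + (n - 1))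
    have e0 : C (2 * n) = C 0 := by
      have h1 := hC.2.2 0; rwa [zero_add] at h1
    rw [show n - 1 - (n - 1) = 0 from by omega, show n + 1 + (n - 1) = 2 * n from by omega,
      e0, hag 0 (by omega)]
    show B 0 = if 0 ≤ n then A 0 else B (2 * n - 0)
    rw [if_pos (by omega), hA0, hB0]
  have hvp := Γ.vp2 (n - 1) (by omega) le_rfl (fun i => C (n + 1 + i)) (n - 1)
    (fun i => B (n - 1 - i)) hp' le_rfl hq' heq1 heq2
  have hCy : C (2 * n - 1) = y := by
    have h1 := hvp.2 (n - 2) (by omega)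
    rw [show n - 1 - (n - 2) = 1 from by omega, show n + 1 + (n - 2) = 2 * n - 1 from by omega,
      hB1] at h1
    exact h1.symm
  have e0 : C (2 * n) = C 0 := by
    have h1 := hC.2.2 0; rwa [zero_add] at h1
  have e1 : C (2 * n + 1) = C 1 := by
    have h1 := hC.2.2 1; rwa [show 1 + 2 * n = 2 * n + 1 from by omega] at h1
  have hc0 : C 0 = w := by
    rw [hag 0 (by omega)]
    show (if 0 ≤ n then A 0 else B (2 * n - 0)) = w
    rw [if_pos (by omega)]; exact hA0
  have hc1 : C 1 = x := by
    rw [hag 1 (by omega)]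
    show (if 1 ≤ n then A 1 else B (2 * n - 1)) = x
    rw [if_pos (by omega)]; exact hA1
  have ho := hC.2.1 (2 * n - 1)
  rw [show 2 * n - 1 + 1 = 2 * n from by omega, show 2 * n - 1 + 2 = 2 * n + 1 from by omega,
    e0, e1, hCy, hc0, hc1] at ho
  exact Γ.opp_symm _ _ _ ho

/-- Triviality propagates to vertices two steps away. -/
lemma two_step (Γ : VeldkampNGon V n) {v u w : V}
    (hv : Γ.toVeldkampGraph.TrivialAt v) (h1 : Γ.adj v u) (h2 : Γ.adj u w) :
    Γ.toVeldkampGraph.TrivialAt w := by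
  have hn : 2 ≤ n := Γ.two_le
  obtain ⟨c, hc1, hc2, hc3⟩ := Γ.plump2 u v w (Γ.adj_symm _ _ h1) h2
  have hq : Γ.toVeldkampGraph.IsStraight 2
      (fun i => if i = 0 then v else if i = 1 then u else c) := by
    apply VeldkampGraph.mkStraight
    · intro i hi
      match i with
      | 0 => exact h1
      | 1 => exact hc1
    · intro i hi
      match i with
      | 0 => exact Γ.opp_symm _ _ _ hc2
  obtain ⟨S, hS, hSag⟩ := Γ.toVeldkampGraph.extendTo (by omega : (1:ℕ) ≤ 2) hq hn
  have hS0 : S 0 = v := by rw [hSag 0 (by omega)]; rfl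
  have hS1 : S 1 = u := by rw [hSag 1 (by omega)]; rfl
  have hS2 : S 2 = c := by rw [hSag 2 (by omega)]; rfl
  have hzt : Γ.toVeldkampGraph.TrivialAt (S n) := by
    refine transport Γ hv (Γ.toVeldkampGraph.straight_rev hS) rfl ?_
    show S (n - n) = v
    rw [Nat.sub_self, hS0]
  have hS' : Γ.toVeldkampGraph.IsStraight n (fun i => if i = 0 then w else S i) := by
    apply VeldkampGraph.mkStraight
    · intro i hi
      match i with
      | 0 =>
        show Γ.adj w (S 1)
        rw [hS1]; exact Γ.adj_symm _ _ h2
      | (j + 1) =>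
        show Γ.adj (S (j + 1)) (S (j + 2))
        exact hS.1.1 (j + 1) hi
    · intro i hi
      match i with
      | 0 =>
        show Γ.opp (S 1) w (S 2)
        rw [hS1, hS2]; exact Γ.opp_symm _ _ _ hc3
      | (j + 1) =>
        show Γ.opp (S (j + 2)) (S (j + 1)) (S (j + 3))
        exact hS.2 (j + 1) hi
  refine transport Γ hzt hS' (by rw [if_pos rfl]) ?_
  show (if n = 0 then w else S n) = S n
  rw [if_neg (by omega)]

/-- Triviality propagates along walks of even length. -/
lemma walk_prop (Γ : VeldkampNGon V n) (m : ℕ) (p : ℕ → V)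
    (ha : ∀ i, i < m + m → Γ.adj (p i) (p (i + 1)))
    (h0 : Γ.toVeldkampGraph.TrivialAt (p 0)) :
    Γ.toVeldkampGraph.TrivialAt (p (m + m)) := by
  induction m with
  | zero => exact h0
  | succ m ih =>
    have h1 := ih (fun i hi => ha i (by omega))
    have h2 := two_step Γ h1 (ha (m + m) (by omega)) (ha (m + m + 1) (by omega))
    rwa [show m + 1 + (m + 1) = m + m + 1 + 1 from by omega]

end VeldkampNGon

/-- If the local opposition relation is trivial at `v`, it is trivial at every
vertex at even distance from `v`; if moreover `n` is odd, it is trivial at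
every vertex. -/
theorem stmt5 {V : Type*} {n : ℕ} (Γ : VeldkampNGon V n) (v : V)
    (h : Γ.toVeldkampGraph.TrivialAt v) :
    (∀ w k, Even k → Γ.DistEq v w k → Γ.toVeldkampGraph.TrivialAt w) ∧
    (Odd n → ∀ w : V, Γ.toVeldkampGraph.TrivialAt w) := by
  constructor
  · rintro w k hk hdist
    obtain ⟨m, rfl⟩ := hk
    obtain ⟨P, hP, hP0, hPk⟩ := hdist.1
    have h1 := Γ.walk_prop m P (fun i hi => hP.1 i hi) (by rwa [hP0])
    rwa [hPk] at h1
  · intro hodd w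
    obtain ⟨s, P, hP, hP0, hPs⟩ := Γ.connected v w
    rcases Nat.even_or_odd s with hse | hso
    · obtain ⟨m, rfl⟩ := hse
      have h1 := Γ.walk_prop m P (fun i hi => hP.1 i hi) (by rwa [hP0])
      rwa [hPs] at h1
    · have hn : 2 ≤ n := Γ.two_le
      have hs1 : 1 ≤ s := by rcases hso with ⟨t, ht⟩; omega
      have hvu : Γ.adj v (P 1) := by
        have h1 := hP.1 0 (by omega); rwa [hP0] at h1
      have hq1 : Γ.toVeldkampGraph.IsStraight 1 (fun i => if i = 0 then v else P 1) := by
        apply VeldkampGraph.mkStraight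
        · intro i hi
          match i with
          | 0 => exact hvu
        · intro i hi
          omega
      obtain ⟨Q, hQ, hQag⟩ := Γ.toVeldkampGraph.extendTo le_rfl hq1 (by omega : 1 ≤ n)
      have hQ0 : Q 0 = v := by rw [hQag 0 (by omega)]; rfl
      have hz : Γ.toVeldkampGraph.TrivialAt (Q n) := by
        refine Γ.transport h (Γ.toVeldkampGraph.straight_rev hQ) rfl ?_
        show Q (n - n) = v
        rw [Nat.sub_self, hQ0]
      obtain ⟨m, hm⟩ : ∃ m, n + s = m + m := by
        rcases hodd with ⟨a, ha⟩; rcases hso with ⟨b, hb⟩; exact ⟨a + b + 1, by omega⟩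
      have hchain : ∀ i, i < m + m →
          Γ.adj ((fun i => if i ≤ n then Q (n - i) else P (i - n)) i)
            ((fun i => if i ≤ n then Q (n - i) else P (i - n)) (i + 1)) := by
        intro i hi
        have hi' : i < n + s := by omega
        show Γ.adj (if i ≤ n then Q (n - i) else P (i - n))
          (if i + 1 ≤ n then Q (n - (i + 1)) else P (i + 1 - n))
        by_cases h1 : i < n
        · rw [if_pos (by omega : i ≤ n), if_pos (by omega : i + 1 ≤ n)]
          have h2 := hQ.1.1 (n - (i + 1)) (by omega)
          rw [show n - (i + 1) + 1 = n - i from by omega] at h2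
          exact Γ.adj_symm _ _ h2
        · by_cases h3 : i = n
          · rw [if_pos (by omega : i ≤ n), if_neg (by omega : ¬ i + 1 ≤ n), h3,
              Nat.sub_self, hQ0, show n + 1 - n = 1 from by omega]
            exact hvu
          · rw [if_neg (by omega : ¬ i ≤ n), if_neg (by omega : ¬ i + 1 ≤ n)]
            have h2 := hP.1 (i - n) (by omega)
            rw [show i - n + 1 = i + 1 - n from by omega] at h2
            exact h2
      have h0 : Γ.toVeldkampGraph.TrivialAt
          ((fun i => if i ≤ n then Q (n - i) else P (i - n)) 0) := by
        show Γ.toVeldkampGraph.TrivialAt (if 0 ≤ n then Q (n - 0) else P (0 - n))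
        rw [if_pos (by omega)]
        exact hz
      have h4 := Γ.walk_prop m _ hchain h0
      have h5 : (fun i => if i ≤ n then Q (n - i) else P (i - n)) (m + m) = w := by
        show (if m + m ≤ n then Q (n - (m + m)) else P (m + m - n)) = w
        rw [if_neg (by omega), show m + m - n = s from by omega]
        exact hPs
      rw [← h5]
      exact h4
end

section
/- A green Veldkamp quadrangle contains no circuits of length 4. -/
/-- A green Veldkamp quadrangle: a Veldkamp 4-gon with a bipartition into
points `Pt` and lines (the complement), whose local opposition relations at
lines are trivial. -/
structure GreenVQ (V : Type*) extends VeldkampNGon V 4 where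
  Pt : Set V
  part : ∀ u v, adj u v → (u ∈ Pt ↔ v ∉ Pt)
  green : ∀ x, x ∉ Pt → ∀ a b, adj x a → adj x b → a ≠ b → opp x a b

namespace GreenVQ

variable {V : Type*} (Γ : GreenVQ V)

/-- A weed: a non-straight 4-path `(a,x,b,y,c)` with `a,b,c` points and
`dist (a, c) = 4`. -/
def IsWeed (p : ℕ → V) : Prop :=
  Γ.IsPath 4 p ∧ ¬ Γ.IsStraight 4 p ∧ p 0 ∈ Γ.Pt ∧ p 2 ∈ Γ.Pt ∧ p 4 ∈ Γ.Pt ∧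
    Γ.DistEq (p 0) (p 4) 4

/-- `a ≃ b` for points: `a = b` or some weed begins at `a` and ends at `b`. -/
def PtSim (a b : V) : Prop :=
  a = b ∨ ∃ p, Γ.IsWeed p ∧ p 0 = a ∧ p 4 = b

/-- `x ~ y` for lines: some weed contains both `x` and `y`. -/
def LnSim (x y : V) : Prop :=
  ∃ p, Γ.IsWeed p ∧ ((p 1 = x ∧ p 3 = y) ∨ (p 1 = y ∧ p 3 = x))

/-- Flat: no two vertices have the same set of opposite vertices. -/
def Flat : Prop := ∀ x y : V, Γ.opSet x = Γ.opSet y → x = y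

end GreenVQ

/-- Key lemma: two 2-paths `a,x,b` and `a,y,b` with lines `x, y` in a green
Veldkamp quadrangle must coincide. -/
lemma GreenVQ.key {V : Type*} (Γ : GreenVQ V) (a x y b : V)
    (hax : Γ.adj a x) (hxb : Γ.adj x b) (hay : Γ.adj a y) (hyb : Γ.adj y b)
    (hab : a ≠ b) (hx : x ∉ Γ.Pt) (hy : y ∉ Γ.Pt) : x = y := by
  set p : ℕ → V := fun i => if i = 0 then a else if i = 1 then x else b with hp
  set q : ℕ → V := fun i => if i = 0 then a else if i = 1 then y else b with hq
  have hps : Γ.toVeldkampGraph.IsStraight 2 p := by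
    refine ⟨⟨?_, ?_⟩, ?_⟩
    · intro i hi
      interval_cases i
      · simpa [hp] using hax
      · simpa [hp] using hxb
    · intro i hi
      have : i = 0 := by omega
      subst this
      simpa [hp] using hab
    · intro i hi
      have : i = 0 := by omega
      subst this
      have := Γ.green x hx a b (Γ.adj_symm a x hax) hxb hab
      simpa [hp] using this
  have hqs : Γ.toVeldkampGraph.IsStraight 2 q := by
    refine ⟨⟨?_, ?_⟩, ?_⟩
    · intro i hi
      interval_cases i
      · simpa [hq] using hay
      · simpa [hq] using hyb
    · intro i hi
      have : i = 0 := by omega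
      subst this
      simpa [hq] using hab
    · intro i hi
      have : i = 0 := by omega
      subst this
      have := Γ.green y hy a b (Γ.adj_symm a y hay) hyb hab
      simpa [hq] using this
  have h := Γ.vp2 2 (by norm_num) (by norm_num) p 2 q hps (le_refl 2) hqs
      (by simp [hp, hq]) (by simp [hp, hq])
  have h1 := h.2 1 (by norm_num)
  simpa [hp, hq] using h1.symm

/-- A green Veldkamp quadrangle contains no circuits of length 4. -/
theorem stmt6 {V : Type*} (Γ : GreenVQ V) : ¬ ∃ q : ℕ → V, Γ.IsCircuit 4 q := by
  rintro ⟨q, hadj, hper, hinj⟩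
  have h30 : Γ.adj (q 3) (q 0) := by
    have := hadj 3
    have h4 : q 4 = q 0 := hper 0
    rwa [show (3 : ℕ) + 1 = 4 from rfl, h4] at this
  have h02 : q 0 ≠ q 2 := fun h => by
    have := hinj 0 2 (by norm_num) (by norm_num) h; omega
  have h13 : q 1 ≠ q 3 := fun h => by
    have := hinj 1 3 (by norm_num) (by norm_num) h; omega
  by_cases h1 : q 1 ∈ Γ.Pt
  · -- then q 0 and q 2 are lines
    have h0 : q 0 ∉ Γ.Pt := fun h => ((Γ.part (q 0) (q 1) (hadj 0)).mp h) h1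
    have h2 : q 2 ∉ Γ.Pt := (Γ.part (q 1) (q 2) (hadj 1)).mp h1
    exact h02 (Γ.key (q 1) (q 0) (q 2) (q 3)
      (Γ.adj_symm _ _ (hadj 0)) (Γ.adj_symm _ _ h30)
      (hadj 1) (hadj 2) h13 h0 h2)
  · -- then q 1 and q 3 are lines
    have h0 : q 0 ∈ Γ.Pt := (Γ.part (q 0) (q 1) (hadj 0)).mpr h1
    have h3 : q 3 ∉ Γ.Pt := fun h => ((Γ.part (q 3) (q 0) h30).mp h) h0
    exact h13 (Γ.key (q 0) (q 1) (q 3) (q 2)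
      (hadj 0) (hadj 1) (Γ.adj_symm _ _ h30) (Γ.adj_symm _ _ (hadj 2))
      h02 h1 h3)
end

section
/- In a green Veldkamp quadrangle, no 6-circuit contains a straight 2-path (x,a,y) whose middle vertex a is a point. -/
/-- In a green Veldkamp quadrangle, no 6-circuit contains a straight 2-path
whose middle vertex is a point. -/
theorem stmt7 {V : Type*} (Γ : GreenVQ V) (q : ℕ → V) (hq : Γ.IsCircuit 6 q)
    (i : ℕ) (hmid : q (i + 1) ∈ Γ.Pt) :
    ¬ Γ.opp (q (i + 1)) (q i) (q (i + 2)) := by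
  intro hop
  obtain ⟨hadj, hper, hinj⟩ := hq
  -- periodicity
  have hq6 : ∀ t j, q (j + 6 * t) = q j := by
    intro t
    induction t with
    | zero => intro j; simp
    | succ t ih =>
        intro j
        have h : j + 6 * (t + 1) = (j + 6 * t) + 6 := by ring
        rw [h, hper, ih]
  have hmod : ∀ j, q j = q (j % 6) := by
    intro j
    conv_lhs => rw [← Nat.mod_add_div j 6]
    exact hq6 (j / 6) (j % 6)
  have hne : ∀ k l, k < 6 → l < 6 → q (i + k) = q (i + l) → k = l := by
    intro k l hk hl h
    have h2 := hinj ((i + k) % 6) ((i + l) % 6) (Nat.mod_lt _ (by norm_num))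
      (Nat.mod_lt _ (by norm_num)) (by rw [← hmod, ← hmod]; exact h)
    omega
  -- bipartition
  have hL2 : q (i + 2) ∉ Γ.Pt := (Γ.part _ _ (hadj (i + 1))).mp hmid
  have hL0 : q i ∉ Γ.Pt := by have := Γ.part _ _ (hadj i); tauto
  have hP3 : q (i + 3) ∈ Γ.Pt := by have := Γ.part _ _ (hadj (i + 2)); tauto
  have hL4 : q (i + 4) ∉ Γ.Pt := by have := Γ.part _ _ (hadj (i + 3)); tauto
  have hP5 : q (i + 5) ∈ Γ.Pt := by have := Γ.part _ _ (hadj (i + 4)); tauto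
  -- extra adjacency
  have hadj50 : Γ.adj (q (i + 5)) (q i) := by
    have h := hadj (i + 5)
    rw [show i + 5 + 1 = i + 6 from rfl, hper] at h
    exact h
  -- distinctness
  have d13 : q (i + 1) ≠ q (i + 3) := fun h => by
    have := hne 1 3 (by norm_num) (by norm_num) h; omega
  have d02 : q i ≠ q (i + 2) := fun h => by
    have := hne 0 2 (by norm_num) (by norm_num) h; omega
  have d15 : q (i + 1) ≠ q (i + 5) := fun h => by
    have := hne 1 5 (by norm_num) (by norm_num) h; omega
  have d35 : q (i + 3) ≠ q (i + 5) := fun h => by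
    have := hne 3 5 (by norm_num) (by norm_num) h; omega
  -- green opposition at lines
  have g2 : Γ.opp (q (i + 2)) (q (i + 3)) (q (i + 1)) :=
    Γ.green _ hL2 _ _ (hadj (i + 2)) (Γ.adj_symm _ _ (hadj (i + 1))) d13.symm
  have g0 : Γ.opp (q i) (q (i + 1)) (q (i + 5)) :=
    Γ.green _ hL0 _ _ (hadj i) (Γ.adj_symm _ _ hadj50) d15
  have g4 : Γ.opp (q (i + 4)) (q (i + 5)) (q (i + 3)) :=
    Γ.green _ hL4 _ _ (hadj (i + 4)) (Γ.adj_symm _ _ (hadj (i + 3))) d35.symm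
  -- plump at the point q (i+3)
  obtain ⟨z, hz, hz2, hz4⟩ := Γ.plump2 (q (i + 3)) (q (i + 2)) (q (i + 4))
    (Γ.adj_symm _ _ (hadj (i + 2))) (hadj (i + 3))
  have zne2 : z ≠ q (i + 2) := fun h => Γ.opp_irrefl _ _ (h ▸ hz2)
  have zne4 : z ≠ q (i + 4) := fun h => Γ.opp_irrefl _ _ (h ▸ hz4)
  -- the straight 5-path
  let p : ℕ → V := fun j => match j with
    | 0 => z
    | 1 => q (i + 3)
    | 2 => q (i + 2)
    | 3 => q (i + 1)
    | 4 => q i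
    | _ + 5 => q (i + 5)
  have hp : Γ.toVeldkampGraph.IsStraight 5 p := by
    refine ⟨⟨?_, ?_⟩, ?_⟩
    · intro j hj
      have hj' : j ≤ 4 := by omega
      clear hj
      interval_cases j
      · exact Γ.adj_symm _ _ hz
      · exact Γ.adj_symm _ _ (hadj (i + 2))
      · exact Γ.adj_symm _ _ (hadj (i + 1))
      · exact Γ.adj_symm _ _ (hadj i)
      · exact Γ.adj_symm _ _ hadj50
    · intro j hj
      have hj' : j ≤ 3 := by omega
      clear hj
      interval_cases j
      · exact zne2
      · exact d13.symm
      · exact d02.symm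
      · exact d15
    · intro j hj
      have hj' : j ≤ 3 := by omega
      clear hj
      interval_cases j
      · exact hz2
      · exact g2
      · exact Γ.opp_symm _ _ _ hop
      · exact g0
  obtain ⟨q', ⟨cadj, copp, cper⟩, hq'p⟩ := Γ.vp3 p hp
  -- two straight 3-paths from q (i+5) to z
  let r : ℕ → V := fun j => match j with
    | 0 => q (i + 5)
    | 1 => q (i + 4)
    | 2 => q (i + 3)
    | _ => z
  let r' : ℕ → V := fun j => q' (j + 5)
  have hr : Γ.toVeldkampGraph.IsStraight 3 r := by
    refine ⟨⟨?_, ?_⟩, ?_⟩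
    · intro j hj
      have hj' : j ≤ 2 := by omega
      clear hj
      interval_cases j
      · exact Γ.adj_symm _ _ (hadj (i + 4))
      · exact Γ.adj_symm _ _ (hadj (i + 3))
      · exact hz
    · intro j hj
      have hj' : j ≤ 1 := by omega
      clear hj
      interval_cases j
      · exact d35.symm
      · exact fun h => zne4 h.symm
    · intro j hj
      have hj' : j ≤ 1 := by omega
      clear hj
      interval_cases j
      · exact g4
      · exact Γ.opp_symm _ _ _ hz4
  have hr' : Γ.toVeldkampGraph.IsStraight 3 r' := by
    refine ⟨⟨?_, ?_⟩, ?_⟩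
    · intro j hj
      exact cadj (j + 5)
    · intro j hj
      have hj' : j ≤ 1 := by omega
      clear hj
      interval_cases j
      · intro h
        have h' : q' 5 = q' 7 := h
        exact Γ.opp_irrefl _ _ (h' ▸ copp 5)
      · intro h
        have h' : q' 6 = q' 8 := h
        exact Γ.opp_irrefl _ _ (h' ▸ copp 6)
    · intro j hj
      have hj' : j ≤ 1 := by omega
      clear hj
      interval_cases j
      · exact copp 5
      · exact copp 6
  have e0 : r 0 = r' 0 := by
    show q (i + 5) = q' 5
    exact (hq'p 5 (by norm_num)).symm
  have e3 : r 3 = r' 3 := by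
    show z = q' 8
    have h8 : q' 8 = q' 0 := cper 0
    rw [h8, hq'p 0 (by norm_num)]
  obtain ⟨-, heq⟩ := Γ.vp2 3 (by norm_num) (by norm_num) r' 3 r hr' (le_refl 3) hr e0 e3
  have h2 : q (i + 3) = q' 7 := heq 2 (by norm_num)
  -- contradiction
  have hfin := copp 7
  have e9 : q' 9 = q (i + 3) := by
    have h := cper 1
    rw [show (1 : ℕ) + 2 * 4 = 9 from rfl] at h
    rw [h, hq'p 1 (by norm_num)]
  rw [show (7 : ℕ) + 1 = 8 from rfl, show (7 : ℕ) + 2 = 9 from rfl, e9, ← h2] at hfin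
  exact Γ.opp_irrefl _ _ hfin
end

section
/- In a green Veldkamp quadrangle, any two opposite points are at distance exactly 4. -/
lemma GreenVQ.parity {V : Type*} (Γ : GreenVQ V) (p : ℕ → V) (s : ℕ)
    (hadj : ∀ i, i < s → Γ.adj (p i) (p (i+1))) (h0 : p 0 ∈ Γ.Pt) :
    ∀ i ≤ s, (p i ∈ Γ.Pt ↔ Even i) := by
  intro i hi
  induction i with
  | zero => simpa using h0
  | succ k ih =>
    have hk := ih (le_of_lt (Nat.lt_of_succ_le hi))
    have h2 : p (k+1) ∈ Γ.Pt ↔ ¬ (p k ∈ Γ.Pt) := by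
      have := Γ.part _ _ (hadj k (Nat.lt_of_succ_le hi))
      tauto
    rw [h2, hk, Nat.even_add_one]

/-- In a green Veldkamp quadrangle, opposite points are at distance exactly 4. -/
theorem stmt8 {V : Type*} (Γ : GreenVQ V) (a b : V) (ha : a ∈ Γ.Pt) (hb : b ∈ Γ.Pt)
    (h : Γ.Opp a b) : Γ.DistEq a b 4 := by
  obtain ⟨p, hp, hp0, hp4⟩ := h
  obtain ⟨⟨hadj, hne⟩, hopp⟩ := hp
  constructor
  · exact ⟨p, ⟨hadj, hne⟩, hp0, hp4⟩
  · rintro j hj ⟨q, hq, hq0, hqj⟩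
    obtain ⟨qadj, qne⟩ := id hq
    interval_cases j
    · -- j = 0 : a = b
      have hab : a = b := by rw [← hq0, hqj]
      -- p is a straight 4-path from a to a
      have hP3 : Γ.IsStraight 3 p :=
        ⟨⟨fun i hi => hadj i (by omega), fun i hi => hne i (by omega)⟩,
          fun i hi => hopp i (by omega)⟩
      set q1 : ℕ → V := fun i => if i = 0 then a else p 3 with hq1def
      have hq1 : Γ.IsStraight 1 q1 := by
        refine ⟨⟨fun i hi => ?_, fun i hi => by omega⟩, fun i hi => by omega⟩
        interval_cases i
        · have h34 : Γ.adj (p 3) (p 4) := hadj 3 (by norm_num)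
          have : Γ.adj a (p 3) := by
            rw [hab, ← hp4]; exact Γ.adj_symm _ _ h34
          simpa [hq1def] using this
      have := Γ.vp2 3 (by norm_num) (by norm_num) p 1 q1 hP3 (by norm_num) hq1
        (by simp [hq1def, hp0]) (by simp [hq1def])
      omega
    · -- j = 1 : parity
      have := (Γ.parity q 1 qadj (by rw [hq0]; exact ha) 1 le_rfl).mp
        (by rw [hqj]; exact hb)
      simp at this
    · -- j = 2 : the main case
      have hax : Γ.adj a (q 1) := by have := qadj 0 (by norm_num); rwa [hq0] at this
      have hxb : Γ.adj (q 1) b := by have := qadj 1 (by norm_num); rwa [hqj] at this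
      have hab : a ≠ b := by have := qne 0 (by norm_num); rwa [hq0, hqj] at this
      have hxPt : q 1 ∉ Γ.Pt := (Γ.part a (q 1) hax).mp ha
      have hoppx : Γ.opp (q 1) a b := Γ.green (q 1) hxPt a b (Γ.adj_symm _ _ hax) hxb hab
      have hb3 : Γ.adj b (p 3) := by
        have := hadj 3 (by norm_num); rw [hp4] at this; exact Γ.adj_symm _ _ this
      obtain ⟨z, hbz, hzx, hzp3⟩ := Γ.plump2 b (q 1) (p 3) (Γ.adj_symm _ _ hxb) hb3
      -- the straight 5-path w = (a, p1, p2, p3, b, z)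
      set w : ℕ → V := fun i => if i = 5 then z else p i with hwdef
      have hw : Γ.IsStraight (4 + 1) w := by
        refine ⟨⟨fun i hi => ?_, fun i hi => ?_⟩, fun i hi => ?_⟩
        · interval_cases i
          · simpa [hwdef] using hadj 0 (by norm_num)
          · simpa [hwdef] using hadj 1 (by norm_num)
          · simpa [hwdef] using hadj 2 (by norm_num)
          · simpa [hwdef] using hadj 3 (by norm_num)
          · show Γ.adj (p 4) z; rw [hp4]; exact hbz
        · have hi' : i ≤ 3 := by omega
          interval_cases i
          · simpa [hwdef] using hne 0 (by norm_num)
          · simpa [hwdef] using hne 1 (by norm_num)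
          · simpa [hwdef] using hne 2 (by norm_num)
          · show p 3 ≠ z
            intro hzz; rw [hzz] at hzp3; exact Γ.opp_irrefl _ _ hzp3
        · have hi' : i ≤ 3 := by omega
          interval_cases i
          · simpa [hwdef] using hopp 0 (by norm_num)
          · simpa [hwdef] using hopp 1 (by norm_num)
          · simpa [hwdef] using hopp 2 (by norm_num)
          · show Γ.opp (p 4) (p 3) z; rw [hp4]; exact Γ.opp_symm _ _ _ hzp3
      obtain ⟨Q, ⟨Qadj, Qopp, Qper⟩, hQw⟩ := Γ.vp3 w hw
      have hQ8 : Q 8 = Q 0 := by have := Qper 0; simpa using this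
      have hQ0 : Q 0 = a := by rw [hQw 0 (by norm_num)]; simpa [hwdef] using hp0
      have hQ5 : Q 5 = z := by rw [hQw 5 (by norm_num)]; simp [hwdef]
      have hQ4 : Q 4 = b := by rw [hQw 4 (by norm_num)]; simpa [hwdef] using hp4
      -- the reversed straight 3-path r = (a, Q7, Q6, z)
      set r : ℕ → V := fun i => Q (8 - i) with hrdef
      have hQne : ∀ i, Q i ≠ Q (i + 2) := by
        intro i heq
        have := Qopp i; rw [← heq] at this; exact Γ.opp_irrefl _ _ this
      have hr : Γ.IsStraight 3 r := by
        refine ⟨⟨fun i hi => ?_, fun i hi => ?_⟩, fun i hi => ?_⟩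
        · have e : 8 - i = (8 - (i + 1)) + 1 := by omega
          show Γ.adj (Q (8 - i)) (Q (8 - (i+1)))
          rw [e]; exact Γ.adj_symm _ _ (Qadj _)
        · have e : 8 - i = (8 - (i + 2)) + 2 := by omega
          show Q (8 - i) ≠ Q (8 - (i + 2))
          rw [e]; exact fun h => hQne _ h.symm
        · have e1 : 8 - (i + 1) = (8 - (i + 2)) + 1 := by omega
          have e2 : 8 - i = (8 - (i + 2)) + 2 := by omega
          show Γ.opp (Q (8 - (i+1))) (Q (8 - i)) (Q (8 - (i+2)))
          rw [e1, e2]; exact Γ.opp_symm _ _ _ (Qopp _)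
      -- the straight 3-path v = (a, q1, b, z)
      set v : ℕ → V := fun i => if i = 0 then a else if i = 1 then q 1 else
        if i = 2 then b else z with hvdef
      have hxz : q 1 ≠ z := by
        intro hh; rw [hh] at hzx; exact Γ.opp_irrefl _ _ hzx
      have hv : Γ.IsStraight 3 v := by
        refine ⟨⟨fun i hi => ?_, fun i hi => ?_⟩, fun i hi => ?_⟩
        · interval_cases i
          · simpa [hvdef] using hax
          · simpa [hvdef] using hxb
          · simpa [hvdef] using hbz
        · have hi' : i ≤ 1 := by omega
          interval_cases i
          · simpa [hvdef] using hab
          · simpa [hvdef] using hxz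
        · have hi' : i ≤ 1 := by omega
          interval_cases i
          · simpa [hvdef] using hoppx
          · simpa [hvdef] using Γ.opp_symm _ _ _ hzx
      have hr0 : r 0 = a := by simp [hrdef, hQ8, hQ0]
      have hr3 : r 3 = z := by simpa [hrdef] using hQ5
      obtain ⟨-, heq⟩ := Γ.vp2 3 (by norm_num) (by norm_num) r 3 v hr le_rfl hv
        (by simp [hvdef, hr0]) (by simp [hvdef, hr3])
      have hb6 : b = Q 6 := by simpa [hvdef, hrdef] using heq 2 (by norm_num)
      have : Q 4 = Q 6 := by rw [hQ4, hb6]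
      exact hQne 4 this
    · -- j = 3 : parity
      have := (Γ.parity q 3 qadj (by rw [hq0]; exact ha) 3 le_rfl).mp
        (by rw [hqj]; exact hb)
      simp [Nat.even_iff] at this
end

section
/- In a green Veldkamp quadrangle, if a and b are points with dist(a,b)=4 that are not opposite, then a^op = b^op and the sets of vertices at distance 2 from a and from b coincide. -/
namespace GreenVQ

variable {V : Type*} (Γ : GreenVQ V)

lemma adjs {p q : V} (h : Γ.adj p q) : Γ.adj q p := Γ.adj_symm p q h

lemma opps {v p q : V} (h : Γ.opp v p q) : Γ.opp v q p := Γ.opp_symm v p q h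

lemma oppne {v p q : V} (h : Γ.opp v p q) : p ≠ q := by
  rintro rfl; exact Γ.opp_irrefl v p h

lemma green' {m p q : V} (hm : m ∉ Γ.Pt) (h1 : Γ.adj m p) (h2 : Γ.adj m q) (hpq : p ≠ q) :
    Γ.opp m p q := Γ.green m hm p q h1 h2 hpq

lemma not_pt {m p : V} (h : Γ.adj m p) (hp : p ∈ Γ.Pt) : m ∉ Γ.Pt :=
  fun hm => (Γ.part m p h).mp hm hp

lemma pt_of {m p : V} (h : Γ.adj m p) (hm : m ∉ Γ.Pt) : p ∈ Γ.Pt := by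
  by_contra hp
  exact hm ((Γ.part m p h).mpr hp)

/-- A root from `v0` to `v4`, given by its list of vertices. -/
def Root (v0 v1 v2 v3 v4 : V) : Prop :=
  Γ.adj v0 v1 ∧ Γ.adj v1 v2 ∧ Γ.adj v2 v3 ∧ Γ.adj v3 v4 ∧
    v0 ≠ v2 ∧ v1 ≠ v3 ∧ v2 ≠ v4 ∧
    Γ.opp v1 v0 v2 ∧ Γ.opp v2 v1 v3 ∧ Γ.opp v3 v2 v4

lemma root_opp {v0 v1 v2 v3 v4 : V} (h : Γ.Root v0 v1 v2 v3 v4) : Γ.Opp v0 v4 := by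
  obtain ⟨a1, a2, a3, a4, n1, n2, n3, o1, o2, o3⟩ := h
  refine ⟨fun i => match i with | 0 => v0 | 1 => v1 | 2 => v2 | 3 => v3 | _ => v4,
    ⟨⟨?_, ?_⟩, ?_⟩, rfl, rfl⟩
  · intro i hi
    interval_cases i
    · exact a1
    · exact a2
    · exact a3
    · exact a4
  · intro i hi
    have hi' : i ≤ 2 := by omega
    interval_cases i
    · exact n1
    · exact n2
    · exact n3
  · intro i hi
    have hi' : i ≤ 2 := by omega
    interval_cases i
    · exact o1
    · exact o2
    · exact o3

lemma opp_elim {P Q : V} (h : Γ.Opp P Q) : ∃ v1 v2 v3, Γ.Root P v1 v2 v3 Q := by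
  obtain ⟨p, ⟨⟨hadj, hne⟩, hopp⟩, h0, h4⟩ := h
  have a1 : Γ.adj (p 0) (p 1) := hadj 0 (by omega)
  have a2 : Γ.adj (p 1) (p 2) := hadj 1 (by omega)
  have a3 : Γ.adj (p 2) (p 3) := hadj 2 (by omega)
  have a4 : Γ.adj (p 3) (p 4) := hadj 3 (by omega)
  have n1 : p 0 ≠ p 2 := hne 0 (by omega)
  have n2 : p 1 ≠ p 3 := hne 1 (by omega)
  have n3 : p 2 ≠ p 4 := hne 2 (by omega)
  have o1 : Γ.opp (p 1) (p 0) (p 2) := hopp 0 (by omega)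
  have o2 : Γ.opp (p 2) (p 1) (p 3) := hopp 1 (by omega)
  have o3 : Γ.opp (p 3) (p 2) (p 4) := hopp 2 (by omega)
  rw [h0] at a1 n1 o1
  rw [h4] at a4 n3 o3
  exact ⟨p 1, p 2, p 3, a1, a2, a3, a4, n1, n2, n3, o1, o2, o3⟩

lemma root_symm {v0 v1 v2 v3 v4 : V} (h : Γ.Root v0 v1 v2 v3 v4) : Γ.Root v4 v3 v2 v1 v0 := by
  obtain ⟨a1, a2, a3, a4, n1, n2, n3, o1, o2, o3⟩ := h
  exact ⟨Γ.adjs a4, Γ.adjs a3, Γ.adjs a2, Γ.adjs a1, n3.symm, n2.symm, n1.symm,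
    Γ.opps o3, Γ.opps o2, Γ.opps o1⟩

lemma opp_symm'' {P Q : V} (h : Γ.Opp P Q) : Γ.Opp Q P := by
  obtain ⟨v1, v2, v3, hr⟩ := Γ.opp_elim h
  exact Γ.root_opp (Γ.root_symm hr)

/-- Pivot of a root at its first vertex, using `vp3`. -/
lemma pivot {P r1 r2 r3 ρ m : V} (h : Γ.Root P r1 r2 r3 ρ) (hm : Γ.adj P m)
    (ho : Γ.opp P m r1) : ∃ s n, Γ.Root P m s n ρ := by
  obtain ⟨a1, a2, a3, a4, n1, n2, n3, o1, o2, o3⟩ := h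
  have hQ : Γ.IsStraight 5 (fun i => match i with
      | 0 => m | 1 => P | 2 => r1 | 3 => r2 | 4 => r3 | _ => ρ) := by
    refine ⟨⟨?_, ?_⟩, ?_⟩
    · intro i hi
      interval_cases i
      · exact Γ.adjs hm
      · exact a1
      · exact a2
      · exact a3
      · exact a4
    · intro i hi
      have hi' : i ≤ 3 := by omega
      interval_cases i
      · exact Γ.oppne ho
      · exact n1
      · exact n2
      · exact n3
    · intro i hi
      have hi' : i ≤ 3 := by omega
      interval_cases i
      · exact ho
      · exact o1
      · exact o2
      · exact o3
  obtain ⟨q, ⟨qadj, qopp, qper⟩, hag⟩ := Γ.vp3 _ hQ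
  have e0 : q 0 = m := hag 0 (by omega)
  have e1 : q 1 = P := hag 1 (by omega)
  have e5 : q 5 = ρ := hag 5 (by omega)
  have e8 : q 8 = m := by
    have h8 : q 8 = q 0 := qper 0
    rw [h8, e0]
  have e9 : q 9 = P := by
    have h9 : q 9 = q 1 := qper 1
    rw [h9, e1]
  have A5 : Γ.adj (q 5) (q 6) := qadj 5
  rw [e5] at A5
  have A6 : Γ.adj (q 6) (q 7) := qadj 6
  have A7 : Γ.adj (q 7) (q 8) := qadj 7
  rw [e8] at A7
  have O5 : Γ.opp (q 6) (q 5) (q 7) := qopp 5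
  rw [e5] at O5
  have O6 : Γ.opp (q 7) (q 6) (q 8) := qopp 6
  rw [e8] at O6
  have O7 : Γ.opp (q 8) (q 7) (q 9) := qopp 7
  rw [e8, e9] at O7
  exact ⟨q 7, q 6, hm, Γ.adjs A7, Γ.adjs A6, Γ.adjs A5,
    (Γ.oppne O7).symm, (Γ.oppne O6).symm, (Γ.oppne O5).symm,
    Γ.opps O7, Γ.opps O6, Γ.opps O5⟩

/-- First-line version of the pivot: there is a root from `P` to `ρ` through any
given neighbour `e` of `P`. -/
lemma t7 {P ρ e : V} (h : Γ.Opp P ρ) (he : Γ.adj P e) : ∃ s n, Γ.Root P e s n ρ := by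
  obtain ⟨r1, r2, r3, hr⟩ := Γ.opp_elim h
  obtain ⟨m, hPm, hm1, hm2⟩ := Γ.plump2 P r1 e hr.1 he
  obtain ⟨s, n, hr2⟩ := Γ.pivot hr hPm hm1
  exact Γ.pivot hr2 he (Γ.opps hm2)

/-- Last-line version of the pivot. -/
lemma farT7 {P ρ L : V} (h : Γ.Opp P ρ) (hL : Γ.adj L ρ) :
    ∃ v1 v2, Γ.Root P v1 v2 L ρ := by
  obtain ⟨s, n, hr⟩ := Γ.t7 (Γ.opp_symm'' h) (Γ.adjs hL)
  exact ⟨n, s, Γ.root_symm hr⟩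

/-- Key lemma: if `P` is opposite `ρ`, `m` is a line through `P` and `s` is a
vertex on `m`, then either `s` is opposite `ρ`, or `s` and `ρ` have a common
neighbour. -/
lemma star {P m s ρ : V} (hOpp : Γ.Opp P ρ) (hPm : Γ.adj P m) (hms : Γ.adj m s)
    (hmPt : m ∉ Γ.Pt) : Γ.Opp s ρ ∨ ∃ nn, Γ.adj nn s ∧ Γ.adj nn ρ := by
  obtain ⟨e, hPe, hoe, -⟩ := Γ.plump2 P m m hPm hPm
  obtain ⟨ζ, η, hr⟩ := Γ.t7 hOpp hPe
  obtain ⟨a1, a2, a3, a4, n1, n2, n3, o1, o2, o3⟩ := hr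
  have hQ : Γ.IsStraight 5 (fun i => match i with
      | 0 => m | 1 => P | 2 => e | 3 => ζ | 4 => η | _ => ρ) := by
    refine ⟨⟨?_, ?_⟩, ?_⟩
    · intro i hi
      interval_cases i
      · exact Γ.adjs hPm
      · exact a1
      · exact a2
      · exact a3
      · exact a4
    · intro i hi
      have hi' : i ≤ 3 := by omega
      interval_cases i
      · exact (Γ.oppne hoe).symm
      · exact n1
      · exact n2
      · exact n3
    · intro i hi
      have hi' : i ≤ 3 := by omega
      interval_cases i
      · exact Γ.opps hoe
      · exact o1
      · exact o2
      · exact o3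
  obtain ⟨q, ⟨qadj, qopp, qper⟩, hag⟩ := Γ.vp3 _ hQ
  have e0 : q 0 = m := hag 0 (by omega)
  have e5 : q 5 = ρ := hag 5 (by omega)
  have e8 : q 8 = m := by
    have h8 : q 8 = q 0 := qper 0
    rw [h8, e0]
  have A5 : Γ.adj (q 5) (q 6) := qadj 5
  rw [e5] at A5
  have A6 : Γ.adj (q 6) (q 7) := qadj 6
  have A7 : Γ.adj (q 7) (q 8) := qadj 7
  rw [e8] at A7
  have O5 : Γ.opp (q 6) (q 5) (q 7) := qopp 5
  rw [e5] at O5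
  have O6 : Γ.opp (q 7) (q 6) (q 8) := qopp 6
  rw [e8] at O6
  by_cases hK : q 7 = s
  · right
    exact ⟨q 6, hK ▸ A6, Γ.adjs A5⟩
  · left
    exact Γ.root_opp ⟨Γ.adjs hms, Γ.adjs A7, Γ.adjs A6, Γ.adjs A5,
      fun e' => hK e'.symm, (Γ.oppne O6).symm, (Γ.oppne O5).symm,
      Γ.green' hmPt hms (Γ.adjs A7) (fun e' => hK e'.symm), Γ.opps O6, Γ.opps O5⟩

lemma no_self_opp {P : V} (h : Γ.Opp P P) : False := by
  obtain ⟨r1, r2, r3, a1, a2, a3, a4, n1, n2, n3, o1, o2, o3⟩ := Γ.opp_elim h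
  have h3 : Γ.IsStraight 3 (fun i => match i with | 0 => r1 | 1 => r2 | 2 => r3 | _ => P) := by
    refine ⟨⟨?_, ?_⟩, ?_⟩
    · intro i hi
      interval_cases i
      · exact a2
      · exact a3
      · exact a4
    · intro i hi
      have hi' : i ≤ 1 := by omega
      interval_cases i
      · exact n2
      · exact n3
    · intro i hi
      have hi' : i ≤ 1 := by omega
      interval_cases i
      · exact o2
      · exact o3
  have h1 : Γ.IsStraight 1 (fun i => match i with | 0 => r1 | _ => P) := by
    refine ⟨⟨?_, ?_⟩, ?_⟩
    · intro i hi
      interval_cases i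
      · exact Γ.adjs a1
    · intro i hi
      exact absurd hi (by omega)
    · intro i hi
      exact absurd hi (by omega)
  have hv := Γ.vp2 3 (by omega) (by omega) _ 1 _ h3 (by omega) h1 rfl rfl
  exact absurd hv.1 (by omega)

/-- No vertex opposite a point `P` is collinear with `P`. -/
lemma noc {P v L : V} (h : Γ.Opp P v) (hLP : Γ.adj L P) (hLv : Γ.adj L v)
    (hP : P ∈ Γ.Pt) : False := by
  obtain ⟨θ1, θ2, hr⟩ := Γ.farT7 h hLv
  obtain ⟨a1, a2, a3, a4, n1, n2, n3, o1, o2, o3⟩ := hr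
  exact Γ.no_self_opp (Γ.root_opp ⟨Γ.adjs hLP, Γ.adjs a3, Γ.adjs a2, Γ.adjs a1,
    n1, n2.symm, n1.symm,
    Γ.green' (Γ.not_pt hLP hP) hLP (Γ.adjs a3) n1, Γ.opps o2, Γ.opps o1⟩)

lemma path0 (x : V) : Γ.HasPathLen 0 x x :=
  ⟨fun _ => x, ⟨fun i hi => absurd hi (by omega), fun i hi => absurd hi (by omega)⟩, rfl, rfl⟩

lemma path0_elim {x y : V} (h : Γ.HasPathLen 0 x y) : x = y := by
  obtain ⟨p, -, h0, hs⟩ := h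
  rw [← h0, hs]

lemma path1_elim {x y : V} (h : Γ.HasPathLen 1 x y) : Γ.adj x y := by
  obtain ⟨p, ⟨hadj, -⟩, h0, hs⟩ := h
  have h01 : Γ.adj (p 0) (p 1) := hadj 0 (by omega)
  rwa [h0, hs] at h01

lemma path2 {x m y : V} (h1 : Γ.adj x m) (h2 : Γ.adj m y) (hxy : x ≠ y) :
    Γ.HasPathLen 2 x y := by
  refine ⟨fun i => match i with | 0 => x | 1 => m | _ => y, ⟨?_, ?_⟩, rfl, rfl⟩
  · intro i hi
    interval_cases i
    · exact h1
    · exact h2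
  · intro i hi
    have hi' : i ≤ 0 := by omega
    interval_cases i
    · exact hxy

lemma hasPathLen_symm {s : ℕ} {x y : V} (h : Γ.HasPathLen s x y) : Γ.HasPathLen s y x := by
  obtain ⟨p, ⟨hadj, hne⟩, h0, hs⟩ := h
  refine ⟨fun i => p (s - i), ⟨?_, ?_⟩, ?_, ?_⟩
  · intro i hi
    show Γ.adj (p (s - i)) (p (s - (i + 1)))
    have key : s - i = (s - (i + 1)) + 1 := by omega
    rw [key]
    exact Γ.adjs (hadj (s - (i + 1)) (by omega))
  · intro i hi
    show p (s - i) ≠ p (s - (i + 2))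
    have key : s - i = (s - (i + 2)) + 2 := by omega
    rw [key]
    exact (hne (s - (i + 2)) (by omega)).symm
  · show p (s - 0) = y
    simpa using hs
  · show p (s - s) = x
    simpa using h0

lemma distEq_symm {x y : V} {k : ℕ} (h : Γ.DistEq x y k) : Γ.DistEq y x k :=
  ⟨Γ.hasPathLen_symm h.1, fun j hj hp => h.2 j hj (Γ.hasPathLen_symm hp)⟩

/-- The main lemma: under the hypotheses of the theorem, every vertex opposite
`a` is opposite `b`. -/
lemma main_op {a b u : V} (ha : a ∈ Γ.Pt) (hb : b ∈ Γ.Pt) (hd : Γ.DistEq a b 4)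
    (hno : ¬ Γ.Opp a b) (hu : Γ.Opp a u) : Γ.Opp b u := by
  have hab : a ≠ b := by
    intro e
    exact hd.2 0 (by omega) (by rw [e]; exact Γ.path0 b)
  -- extract a 4-path (a, x, c, y, b)
  obtain ⟨p, ⟨hadj, hne⟩, hp0, hp4⟩ := hd.1
  have wa1 : Γ.adj (p 0) (p 1) := hadj 0 (by omega)
  have wa2 : Γ.adj (p 1) (p 2) := hadj 1 (by omega)
  have wa3 : Γ.adj (p 2) (p 3) := hadj 2 (by omega)
  have wa4 : Γ.adj (p 3) (p 4) := hadj 3 (by omega)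
  have wn1 : p 0 ≠ p 2 := hne 0 (by omega)
  have wn3 : p 2 ≠ p 4 := hne 2 (by omega)
  rw [hp0] at wa1 wn1
  rw [hp4] at wa4 wn3
  set x := p 1 with hxdef
  set c := p 2 with hcdef
  set y := p 3 with hydef
  have hxPt : x ∉ Γ.Pt := Γ.not_pt (Γ.adjs wa1) ha
  have hyPt : y ∉ Γ.Pt := Γ.not_pt wa4 hb
  -- u is a point
  obtain ⟨r1, r2, r3, ra1, ra2, ra3, ra4, -, -, -, -, -, -⟩ := Γ.opp_elim hu
  have hr1Pt : r1 ∉ Γ.Pt := Γ.not_pt (Γ.adjs ra1) ha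
  have hr2Pt : r2 ∈ Γ.Pt := Γ.pt_of ra2 hr1Pt
  have hr3Pt : r3 ∉ Γ.Pt := Γ.not_pt (Γ.adjs ra3) hr2Pt
  have huPt : u ∈ Γ.Pt := Γ.pt_of ra4 hr3Pt
  -- no vertex opposite a is collinear with b
  have nc : ∀ u' : V, Γ.Opp a u' → ∀ m, Γ.adj m u' → Γ.adj m b → False := by
    intro u' hu' m hmu hmb
    obtain ⟨α1, α2, hra⟩ := Γ.farT7 hu' hmu
    obtain ⟨b1, b2, b3, b4, m1', m2', m3', q1, q2, q3⟩ := hra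
    by_cases hα : α2 = b
    · exact hd.2 2 (by omega) (Γ.path2 b1 (hα ▸ b2) hab)
    · exact hno (Γ.opp_symm'' (Γ.root_opp ⟨Γ.adjs hmb, Γ.adjs b3, Γ.adjs b2, Γ.adjs b1,
        fun e => hα e.symm, m2'.symm, m1'.symm,
        Γ.green' (Γ.not_pt hmb hb) hmb (Γ.adjs b3) (fun e => hα e.symm),
        Γ.opps q2, Γ.opps q1⟩))
  -- pivot the root from u to a so that its last line is x
  obtain ⟨m1, m2, hmr⟩ := Γ.farT7 (Γ.opp_symm'' hu) (Γ.adjs wa1)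
  obtain ⟨c1, c2, c3, c4, d1, d2, d3, s1, s2, s3⟩ := hmr
  rcases eq_or_ne m2 c with hc | hc
  · -- case m2 = c : the root from u to a passes through c
    rw [hc] at c2 d1 s2
    have hwPt : m1 ∉ Γ.Pt := Γ.not_pt (Γ.adjs c1) huPt
    obtain ⟨U7, hU7, oU7, -⟩ := Γ.plump2 u m1 m1 c1 c1
    have hU7Pt : U7 ∉ Γ.Pt := Γ.not_pt (Γ.adjs hU7) huPt
    obtain ⟨t, hT, oT, -⟩ := Γ.plump2 U7 u u (Γ.adjs hU7) (Γ.adjs hU7)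
    have htu : t ≠ u := Γ.oppne oT
    have hct : Γ.Opp c t := Γ.root_opp ⟨Γ.adjs c2, Γ.adjs c1, hU7, hT, d1.symm,
      (Γ.oppne oU7).symm, htu.symm,
      Γ.green' hwPt c2 (Γ.adjs c1) d1.symm, Γ.opps oU7,
      Γ.green' hU7Pt (Γ.adjs hU7) hT htu.symm⟩
    rcases Γ.star hct wa3 wa4 hyPt with hbt | ⟨nb, hnb1, hnb2⟩
    · -- t is opposite b : use the line U7 through t and u
      obtain ⟨s', n', hr'⟩ := Γ.t7 (Γ.opp_symm'' hbt) (Γ.adjs hT)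
      obtain ⟨e1', e2', e3', e4', f1', f2', f3', g1', g2', g3'⟩ := hr'
      by_cases hs' : s' = u
      · exact (nc u hu n' (hs' ▸ Γ.adjs e3') e4').elim
      · exact Γ.opp_symm'' (Γ.root_opp ⟨hU7, e2', e3', e4',
          fun e => hs' e.symm, f2', f3',
          Γ.green' hU7Pt (Γ.adjs hU7) e2' (fun e => hs' e.symm), g2', g3'⟩)
    · -- t and b have a common line nb
      obtain ⟨δ, hδ, oδc, oδu⟩ := Γ.plump2 m1 c u c2 (Γ.adjs c1)
      have hδc : δ ≠ c := Γ.oppne oδc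
      have hδu : δ ≠ u := Γ.oppne oδu
      have haδ : Γ.Opp a δ := Γ.root_opp ⟨wa1, wa2, Γ.adjs c2, hδ, wn1, d2.symm, hδc.symm,
        Γ.green' hxPt (Γ.adjs wa1) wa2 wn1, Γ.opps s2, Γ.green' hwPt c2 hδ hδc.symm⟩
      have htδ : Γ.Opp t δ := Γ.root_opp ⟨Γ.adjs hT, Γ.adjs hU7, c1, hδ,
        htu, Γ.oppne oU7, hδu.symm,
        Γ.green' hU7Pt hT (Γ.adjs hU7) htu, oU7, Γ.green' hwPt (Γ.adjs c1) hδ hδu.symm⟩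
      rcases Γ.star htδ (Γ.adjs hnb2) hnb1 (Γ.not_pt hnb1 hb) with hbδ | ⟨n, hn1, hn2⟩
      · obtain ⟨β1, β2, hrβ⟩ := Γ.farT7 hbδ hδ
        obtain ⟨k1, k2, k3, k4, l1, l2, l3, z1, z2, z3⟩ := hrβ
        by_cases hβ : β2 = u
        · exact (nc u hu β1 (hβ ▸ k2) (Γ.adjs k1)).elim
        · exact Γ.opp_symm'' (Γ.root_opp ⟨c1, Γ.adjs k3, Γ.adjs k2, Γ.adjs k1,
            fun e => hβ e.symm, l2.symm, l1.symm,
            Γ.green' hwPt (Γ.adjs c1) (Γ.adjs k3) (fun e => hβ e.symm),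
            Γ.opps z2, Γ.opps z1⟩)
      · exact (nc δ haδ n hn2 hn1).elim
  · -- case m2 ≠ c : then c is opposite u
    have hcu : Γ.Opp c u := Γ.root_opp ⟨Γ.adjs wa2, Γ.adjs c3, Γ.adjs c2, Γ.adjs c1,
      fun e => hc e.symm, d2.symm, d1.symm,
      Γ.green' hxPt wa2 (Γ.adjs c3) (fun e => hc e.symm),
      Γ.opps s2, Γ.opps s1⟩
    obtain ⟨δ1, δ2, hdr⟩ := Γ.farT7 (Γ.opp_symm'' hcu) (Γ.adjs wa3)
    obtain ⟨f1, f2, f3, f4, g1, g2, g3, t1, t2, t3⟩ := hdr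
    by_cases hδ : δ2 = b
    · exact (nc u hu δ1 (Γ.adjs f1) (hδ ▸ f2)).elim
    · exact Γ.root_opp ⟨Γ.adjs wa4, Γ.adjs f3, Γ.adjs f2, Γ.adjs f1,
        fun e => hδ e.symm, g2.symm, g1.symm,
        Γ.green' hyPt wa4 (Γ.adjs f3) (fun e => hδ e.symm),
        Γ.opps t2, Γ.opps t1⟩

/-- The Γ₂-statement, assuming both inclusions of opposite-sets. -/
lemma main_gamma2 {a b v : V} (ha : a ∈ Γ.Pt) (hb : b ∈ Γ.Pt) (hd : Γ.DistEq a b 4)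
    (hsub : ∀ z, Γ.Opp a z → Γ.Opp b z) (hsub' : ∀ z, Γ.Opp b z → Γ.Opp a z)
    (h2 : Γ.DistEq a v 2) : Γ.DistEq b v 2 := by
  have hab : a ≠ b := by
    intro e
    exact hd.2 0 (by omega) (by rw [e]; exact Γ.path0 b)
  obtain ⟨⟨p, ⟨hadj, hne⟩, hp0, hp2⟩, hmin⟩ := h2
  have haL : Γ.adj (p 0) (p 1) := hadj 0 (by omega)
  have hLv : Γ.adj (p 1) (p 2) := hadj 1 (by omega)
  have hav : p 0 ≠ p 2 := hne 0 (by omega)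
  rw [hp0] at haL hav
  rw [hp2] at hLv hav
  set L := p 1 with hLdef
  have hLPt : L ∉ Γ.Pt := Γ.not_pt (Γ.adjs haL) ha
  have hvPt : v ∈ Γ.Pt := Γ.pt_of hLv hLPt
  have hbv : b ≠ v := by
    rintro rfl
    exact hd.2 2 (by omega) (Γ.path2 haL hLv hab)
  obtain ⟨mv, hmv, omv, -⟩ := Γ.plump2 v L L (Γ.adjs hLv) (Γ.adjs hLv)
  have hmvPt : mv ∉ Γ.Pt := Γ.not_pt (Γ.adjs hmv) hvPt
  obtain ⟨ρ, hρ, oρ, -⟩ := Γ.plump2 mv v v (Γ.adjs hmv) (Γ.adjs hmv)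
  have hρv : ρ ≠ v := Γ.oppne oρ
  have haρ : Γ.Opp a ρ := Γ.root_opp ⟨haL, hLv, hmv, hρ, hav, (Γ.oppne omv).symm, hρv.symm,
    Γ.green' hLPt (Γ.adjs haL) hLv hav, Γ.opps omv, Γ.opps oρ⟩
  obtain ⟨β1, β2, hrβ⟩ := Γ.farT7 (hsub ρ haρ) hρ
  obtain ⟨k1, k2, k3, k4, l1, l2, l3, z1, z2, z3⟩ := hrβ
  by_cases hβ : β2 = v
  · refine ⟨Γ.path2 k1 (hβ ▸ k2) hbv, ?_⟩
    intro j hj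
    interval_cases j
    · exact fun hp => hbv (Γ.path0_elim hp)
    · exact fun hp => (Γ.part b v (Γ.path1_elim hp)).mp hb hvPt
  · exfalso
    have hvb : Γ.Opp v b := Γ.root_opp ⟨hmv, Γ.adjs k3, Γ.adjs k2, Γ.adjs k1,
      fun e => hβ e.symm, l2.symm, l1.symm,
      Γ.green' hmvPt (Γ.adjs hmv) (Γ.adjs k3) (fun e => hβ e.symm),
      Γ.opps z2, Γ.opps z1⟩
    exact Γ.noc (hsub' v (Γ.opp_symm'' hvb)) (Γ.adjs haL) hLv ha

end GreenVQ

/-- If `a` and `b` are points at distance 4 that are not opposite, then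
`a^op = b^op` and `Γ₂(a) = Γ₂(b)`. -/
theorem stmt10 {V : Type*} (Γ : GreenVQ V) (a b : V) (ha : a ∈ Γ.Pt) (hb : b ∈ Γ.Pt)
    (hd : Γ.DistEq a b 4) (hno : ¬ Γ.Opp a b) :
    Γ.opSet a = Γ.opSet b ∧ ∀ v : V, Γ.DistEq a v 2 ↔ Γ.DistEq b v 2 := by
  have hd' : Γ.DistEq b a 4 := Γ.distEq_symm hd
  have hno' : ¬ Γ.Opp b a := fun h => hno (Γ.opp_symm'' h)
  have hab : ∀ z, Γ.Opp a z → Γ.Opp b z := fun z hz => Γ.main_op ha hb hd hno hz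
  have hba : ∀ z, Γ.Opp b z → Γ.Opp a z := fun z hz => Γ.main_op hb ha hd' hno' hz
  constructor
  · ext z
    simp only [VeldkampNGon.opSet, Set.mem_setOf_eq]
    exact ⟨hab z, hba z⟩
  · intro v
    exact ⟨fun h => Γ.main_gamma2 ha hb hd hab hba h,
           fun h => Γ.main_gamma2 hb ha hd' hba hab h⟩
end

section
/- In a flat green Veldkamp quadrangle, two points a and b are opposite if and only if dist(a,b)=4. -/
namespace GreenVQ

variable {V : Type*} (Γ : GreenVQ V)

/-- An explicit finite sequence, as a function `ℕ → V`. -/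
private def sq (v0 v1 v2 v3 v4 v5 : V) : ℕ → V
  | 0 => v0
  | 1 => v1
  | 2 => v2
  | 3 => v3
  | 4 => v4
  | _ => v5

private lemma pt_step {u w : V} (h : Γ.adj u w) (hu : u ∉ Γ.Pt) : w ∈ Γ.Pt := by
  by_contra hw; exact hu ((Γ.part u w h).mpr hw)

private lemma npt_step {u w : V} (h : Γ.adj u w) (hu : u ∈ Γ.Pt) : w ∉ Γ.Pt :=
  (Γ.part u w h).mp hu

private lemma ne_of_opp {v α β : V} (h : Γ.opp v α β) : α ≠ β :=
  fun e => Γ.opp_irrefl v β (e ▸ h)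

private lemma mk1 (v0 v1 : V) (a0 : Γ.adj v0 v1) :
    Γ.IsStraight 1 (sq v0 v1 v1 v1 v1 v1) := by
  refine ⟨⟨?_, ?_⟩, ?_⟩
  · intro i hi
    match i, hi with
    | 0, _ => exact a0
  · intro i hi; omega
  · intro i hi; omega

private lemma mk2 (v0 v1 v2 : V) (a0 : Γ.adj v0 v1) (a1 : Γ.adj v1 v2)
    (n0 : v0 ≠ v2) (o1 : Γ.opp v1 v0 v2) :
    Γ.IsStraight 2 (sq v0 v1 v2 v2 v2 v2) := by
  refine ⟨⟨?_, ?_⟩, ?_⟩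
  · intro i hi
    match i, hi with
    | 0, _ => exact a0
    | 1, _ => exact a1
  · intro i hi
    match i, hi with
    | 0, _ => exact n0
  · intro i hi
    match i, hi with
    | 0, _ => exact o1

private lemma mk4 (v0 v1 v2 v3 v4 : V)
    (a0 : Γ.adj v0 v1) (a1 : Γ.adj v1 v2) (a2 : Γ.adj v2 v3) (a3 : Γ.adj v3 v4)
    (n0 : v0 ≠ v2) (n1 : v1 ≠ v3) (n2 : v2 ≠ v4)
    (o1 : Γ.opp v1 v0 v2) (o2 : Γ.opp v2 v1 v3) (o3 : Γ.opp v3 v2 v4) :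
    Γ.IsStraight 4 (sq v0 v1 v2 v3 v4 v4) := by
  refine ⟨⟨?_, ?_⟩, ?_⟩
  · intro i hi
    match i, hi with
    | 0, _ => exact a0
    | 1, _ => exact a1
    | 2, _ => exact a2
    | 3, _ => exact a3
  · intro i hi
    match i, hi with
    | 0, _ => exact n0
    | 1, _ => exact n1
    | 2, _ => exact n2
  · intro i hi
    match i, hi with
    | 0, _ => exact o1
    | 1, _ => exact o2
    | 2, _ => exact o3

private lemma mk5 (v0 v1 v2 v3 v4 v5 : V)
    (a0 : Γ.adj v0 v1) (a1 : Γ.adj v1 v2) (a2 : Γ.adj v2 v3) (a3 : Γ.adj v3 v4)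
    (a4 : Γ.adj v4 v5)
    (n0 : v0 ≠ v2) (n1 : v1 ≠ v3) (n2 : v2 ≠ v4) (n3 : v3 ≠ v5)
    (o1 : Γ.opp v1 v0 v2) (o2 : Γ.opp v2 v1 v3) (o3 : Γ.opp v3 v2 v4)
    (o4 : Γ.opp v4 v3 v5) :
    Γ.IsStraight 5 (sq v0 v1 v2 v3 v4 v5) := by
  refine ⟨⟨?_, ?_⟩, ?_⟩
  · intro i hi
    match i, hi with
    | 0, _ => exact a0
    | 1, _ => exact a1
    | 2, _ => exact a2
    | 3, _ => exact a3
    | 4, _ => exact a4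
  · intro i hi
    match i, hi with
    | 0, _ => exact n0
    | 1, _ => exact n1
    | 2, _ => exact n2
    | 3, _ => exact n3
  · intro i hi
    match i, hi with
    | 0, _ => exact o1
    | 1, _ => exact o2
    | 2, _ => exact o3
    | 3, _ => exact o4

private lemma isStraight_mono {s' s : ℕ} (hle : s' ≤ s) {p : ℕ → V}
    (h : Γ.IsStraight s p) : Γ.IsStraight s' p :=
  ⟨⟨fun i hi => h.1.1 i (lt_of_lt_of_le hi hle),
    fun i hi => h.1.2 i (le_trans hi hle)⟩,
   fun i hi => h.2 i (le_trans hi hle)⟩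

/-- Any segment of a closed straight walk is straight. -/
private lemma circuit_straight {q : ℕ → V} (h : Γ.IsClosedStraight (2 * 4) q)
    (k s : ℕ) : Γ.IsStraight s (fun i => q (k + i)) := by
  obtain ⟨hadj, hopp, _⟩ := h
  refine ⟨⟨fun i _ => ?_, fun i _ => ?_⟩, fun i _ => ?_⟩
  · show Γ.adj (q (k + i)) (q (k + (i + 1)))
    have e : k + (i + 1) = (k + i) + 1 := by omega
    rw [e]; exact hadj (k + i)
  · show q (k + i) ≠ q (k + (i + 2))
    intro he
    have h2 := hopp (k + i)
    rw [show k + i + 2 = k + (i + 2) from by omega, ← he] at h2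
    exact Γ.opp_irrefl _ _ h2
  · show Γ.opp (q (k + (i + 1))) (q (k + i)) (q (k + (i + 2)))
    have e1 : k + (i + 1) = (k + i) + 1 := by omega
    have e2 : k + (i + 2) = (k + i) + 2 := by omega
    rw [e1, e2]; exact hopp (k + i)

private lemma opp_rev {α γ : V} (h : Γ.Opp α γ) : Γ.Opp γ α := by
  obtain ⟨p, hp, h0, h4⟩ := h
  refine ⟨sq (p 4) (p 3) (p 2) (p 1) (p 0) (p 0), mk4 Γ _ _ _ _ _
    (Γ.adj_symm _ _ (hp.1.1 3 (by omega))) (Γ.adj_symm _ _ (hp.1.1 2 (by omega)))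
    (Γ.adj_symm _ _ (hp.1.1 1 (by omega))) (Γ.adj_symm _ _ (hp.1.1 0 (by omega)))
    (hp.1.2 2 (by omega)).symm (hp.1.2 1 (by omega)).symm (hp.1.2 0 (by omega)).symm
    (Γ.opp_symm _ _ _ (hp.2 2 (by omega))) (Γ.opp_symm _ _ _ (hp.2 1 (by omega)))
    (Γ.opp_symm _ _ _ (hp.2 0 (by omega))), ?_, ?_⟩
  · show p 4 = γ; exact h4
  · show p 0 = α; exact h0

/-- F: the first edge of a root can be replaced by any opposite edge. -/
private lemma Fswap {p : ℕ → V} (hp : Γ.IsStraight 4 p) {s : V}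
    (hs : Γ.opp (p 0) s (p 1)) :
    ∃ q : ℕ → V, Γ.IsStraight 4 q ∧ q 0 = p 0 ∧ q 1 = s ∧ q 4 = p 4 := by
  have P5 : Γ.IsStraight 5 (sq (p 4) (p 3) (p 2) (p 1) (p 0) s) := by
    refine mk5 Γ _ _ _ _ _ _
      (Γ.adj_symm _ _ (hp.1.1 3 (by omega))) (Γ.adj_symm _ _ (hp.1.1 2 (by omega)))
      (Γ.adj_symm _ _ (hp.1.1 1 (by omega))) (Γ.adj_symm _ _ (hp.1.1 0 (by omega)))
      (Γ.opp_adj_left _ _ _ hs)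
      (hp.1.2 2 (by omega)).symm (hp.1.2 1 (by omega)).symm (hp.1.2 0 (by omega)).symm
      (Γ.ne_of_opp hs).symm
      (Γ.opp_symm _ _ _ (hp.2 2 (by omega))) (Γ.opp_symm _ _ _ (hp.2 1 (by omega)))
      (Γ.opp_symm _ _ _ (hp.2 0 (by omega))) (Γ.opp_symm _ _ _ hs)
  obtain ⟨Q, hQ, hag⟩ := Γ.vp3 _ P5
  refine ⟨fun i => Q (4 + i), Γ.circuit_straight hQ 4 4, ?_, ?_, ?_⟩
  · show Q 4 = p 0
    have := hag 4 (by omega); rw [this]; rfl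
  · show Q 5 = s
    have := hag 5 (by omega); rw [this]; rfl
  · show Q 8 = p 4
    have h8 : Q 8 = Q 0 := hQ.2.2 0
    rw [h8, hag 0 (by omega)]; rfl

/-- F2: the first edge of a root can be replaced by any edge at its start. -/
private lemma F2swap {p : ℕ → V} (hp : Γ.IsStraight 4 p) {t : V}
    (ht : Γ.adj (p 0) t) :
    ∃ q : ℕ → V, Γ.IsStraight 4 q ∧ q 0 = p 0 ∧ q 1 = t ∧ q 4 = p 4 := by
  obtain ⟨s, _, hs1, hs2⟩ :=
    Γ.plump2 (p 0) (p 1) t (hp.1.1 0 (by omega)) ht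
  obtain ⟨q1, hq1, e0, e1, e4⟩ := Γ.Fswap hp hs1
  have hopp2 : Γ.opp (q1 0) t (q1 1) := by
    rw [e0, e1]; exact Γ.opp_symm _ _ _ hs2
  obtain ⟨q2, hq2, f0, f1, f4⟩ := Γ.Fswap hq1 hopp2
  exact ⟨q2, hq2, by rw [f0, e0], f1, by rw [f4, e4]⟩

/-- D2: opposite vertices have no common neighbour. -/
private lemma no_common {α γ : V} (h : Γ.Opp α γ) (t : V)
    (h1 : Γ.adj α t) (h2 : Γ.adj γ t) : False := by
  obtain ⟨p, hp, h0, h4⟩ := h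
  have h1' : Γ.adj (p 0) t := by rw [h0]; exact h1
  have h2' : Γ.adj (p 4) t := by rw [h4]; exact h2
  obtain ⟨s, _, hs1, hs2⟩ := Γ.plump2 (p 0) (p 1) t (hp.1.1 0 (by omega)) h1'
  obtain ⟨q, hq, e0, e1, e4⟩ := Γ.Fswap hp hs1
  have P5 : Γ.IsStraight 5 (sq t (p 0) s (q 2) (q 3) (p 4)) := by
    refine mk5 Γ _ _ _ _ _ _ (Γ.adj_symm _ _ h1') (Γ.opp_adj_left _ _ _ hs1)
      ?_ (hq.1.1 2 (by omega)) ?_ ?_ ?_ ?_ ?_ ?_ ?_ ?_ ?_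
    · have := hq.1.1 1 (by omega); rwa [e1] at this
    · have := hq.1.1 3 (by omega); rwa [e4] at this
    · exact (Γ.ne_of_opp hs2).symm
    · have := hq.1.2 0 (by omega); rwa [e0] at this
    · have := hq.1.2 1 (by omega); rwa [e1] at this
    · have := hq.1.2 2 (by omega); rwa [e4] at this
    · exact Γ.opp_symm _ _ _ hs2
    · have := hq.2 0 (by omega); rwa [e0, e1] at this
    · have := hq.2 1 (by omega); rwa [e1] at this
    · have := hq.2 2 (by omega); rwa [e4] at this
  obtain ⟨Q, hQ, hag⟩ := Γ.vp3 _ P5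
  have hseg : Γ.IsStraight 3 (fun i => Q (5 + i)) := Γ.circuit_straight hQ 5 3
  have h1p : Γ.IsStraight 1 (sq (p 4) t t t t t) := mk1 Γ _ _ h2'
  have hq0 : (sq (p 4) t t t t t : ℕ → V) 0 = (fun i => Q (5 + i)) 0 := by
    show p 4 = Q 5
    rw [hag 5 (by omega)]; rfl
  have hq1 : (sq (p 4) t t t t t : ℕ → V) 1 = (fun i => Q (5 + i)) 3 := by
    show t = Q 8
    have h8 : Q 8 = Q 0 := hQ.2.2 0
    rw [h8, hag 0 (by omega)]; rfl
  have hvp2 := Γ.vp2 3 (by omega) (by norm_num) (fun i => Q (5 + i)) 1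
    (sq (p 4) t t t t t) hseg (by omega) h1p hq0 hq1
  omega

/-- Two distinct points are joined by at most one line. -/
private lemma line_unique (β γ L L' : V) (hβγ : β ≠ γ)
    (hL : L ∉ Γ.Pt) (hL' : L' ∉ Γ.Pt)
    (h1 : Γ.adj β L) (h2 : Γ.adj γ L) (h3 : Γ.adj β L') (h4 : Γ.adj γ L') :
    L = L' := by
  have s1 : Γ.IsStraight 2 (sq β L γ γ γ γ) := mk2 Γ _ _ _ h1 (Γ.adj_symm _ _ h2) hβγ
    (Γ.green L hL β γ (Γ.adj_symm _ _ h1) (Γ.adj_symm _ _ h2) hβγ)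
  have s2 : Γ.IsStraight 2 (sq β L' γ γ γ γ) := mk2 Γ _ _ _ h3 (Γ.adj_symm _ _ h4) hβγ
    (Γ.green L' hL' β γ (Γ.adj_symm _ _ h3) (Γ.adj_symm _ _ h4) hβγ)
  have hvp2 := Γ.vp2 2 (by omega) (by norm_num) (sq β L γ γ γ γ) 2 (sq β L' γ γ γ γ)
    s1 (le_refl 2) s2 rfl rfl
  exact (hvp2.2 1 (by omega)).symm

/-- Lemma A: if a 4-path between two points is not straight at its middle
point, then the endpoints are not opposite. -/
private lemma lemA (a x b y c : V)
    (hax : Γ.adj a x) (hxb : Γ.adj x b) (hby : Γ.adj b y) (hyc : Γ.adj y c)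
    (hab : a ≠ b) (hbc : b ≠ c) (hxy : x ≠ y)
    (hPa : a ∈ Γ.Pt) (hPc : c ∈ Γ.Pt)
    (hnopp : ¬ Γ.opp b x y) : ¬ Γ.Opp a c := by
  intro hOpp
  have hxPt : x ∉ Γ.Pt := Γ.npt_step hax hPa
  have hyPt : y ∉ Γ.Pt := Γ.npt_step (Γ.adj_symm _ _ hyc) hPc
  obtain ⟨p0, hp0, e0, e4⟩ := hOpp
  obtain ⟨q, hq, f0, f1, f4⟩ := Γ.F2swap hp0
    (show Γ.adj (p0 0) x by rw [e0]; exact hax)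
  -- q is a root (a, x, d, m, c) with d := q 2, m := q 3
  have aq1 : Γ.adj x (q 2) := by have := hq.1.1 1 (by omega); rwa [f1] at this
  have aq2 : Γ.adj (q 2) (q 3) := hq.1.1 2 (by omega)
  have aq3 : Γ.adj (q 3) c := by have := hq.1.1 3 (by omega); rwa [f4, e4] at this
  have jx : Γ.opp x a (q 2) := by
    have := hq.2 0 (by omega); rwa [f0, e0, f1] at this
  have jd : Γ.opp (q 2) x (q 3) := by have := hq.2 1 (by omega); rwa [f1] at this
  have jm : Γ.opp (q 3) (q 2) c := by have := hq.2 2 (by omega); rwa [f4, e4] at this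
  have nad : a ≠ q 2 := by have := hq.1.2 0 (by omega); rwa [f0, e0] at this
  have nxm : x ≠ q 3 := by have := hq.1.2 1 (by omega); rwa [f1] at this
  have ndc : q 2 ≠ c := by have := hq.1.2 2 (by omega); rwa [f4, e4] at this
  have hmPt : q 3 ∉ Γ.Pt := Γ.npt_step (Γ.adj_symm _ _ aq3) hPc
  have hdb : q 2 ≠ b := by
    intro e
    have hmy : q 3 = y := Γ.line_unique b c (q 3) y hbc hmPt hyPt
      (e ▸ aq2) (Γ.adj_symm _ _ aq3) hby (Γ.adj_symm _ _ hyc)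
    have := jd; rw [e, hmy] at this
    exact hnopp this
  have hmy : q 3 ≠ y := by
    intro e
    exact hxy (Γ.line_unique (q 2) b x y hdb hxPt hyPt
      (Γ.adj_symm _ _ aq1) (Γ.adj_symm _ _ hxb) (e ▸ aq2) hby)
  obtain ⟨s, hsadj, hs1, hs2⟩ :=
    Γ.plump2 c (q 3) y (Γ.adj_symm _ _ aq3) (Γ.adj_symm _ _ hyc)
  have P5 : Γ.IsStraight 5 (sq a x (q 2) (q 3) c s) := mk5 Γ _ _ _ _ _ _
    hax aq1 aq2 aq3 hsadj
    nad nxm ndc (Γ.ne_of_opp hs1).symm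
    jx jd jm (Γ.opp_symm _ _ _ hs1)
  obtain ⟨Q, hQ, hag⟩ := Γ.vp3 _ P5
  have hR2 : Γ.IsStraight 4 (fun i => Q (4 + i)) := Γ.circuit_straight hQ 4 4
  have eQ4 : Q 4 = c := by rw [hag 4 (by omega)]; rfl
  have eQ5 : Q 5 = s := by rw [hag 5 (by omega)]; rfl
  have eQ8 : Q 8 = a := by
    have h8 : Q 8 = Q 0 := hQ.2.2 0
    rw [h8, hag 0 (by omega)]; rfl
  have hoppc : Γ.opp ((fun i => Q (4 + i)) 0) y ((fun i => Q (4 + i)) 1) := by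
    show Γ.opp (Q 4) y (Q 5)
    rw [eQ4, eQ5]; exact Γ.opp_symm _ _ _ hs2
  obtain ⟨r, hr, g0, g1, g4⟩ := Γ.Fswap hR2 hoppc
  have hr0 : r 0 = c := by rw [g0]; exact eQ4
  have hr4 : r 4 = a := by rw [g4]; exact eQ8
  -- r is a root (c, y, E, L, a) with E := r 2, L := r 3
  have ayE : Γ.adj y (r 2) := by have := hr.1.1 1 (by omega); rwa [g1] at this
  have aEL : Γ.adj (r 2) (r 3) := hr.1.1 2 (by omega)
  have aLa : Γ.adj (r 3) a := by have := hr.1.1 3 (by omega); rwa [hr4] at this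
  have jE : Γ.opp (r 2) y (r 3) := by have := hr.2 1 (by omega); rwa [g1] at this
  have nyL : y ≠ r 3 := by have := hr.1.2 1 (by omega); rwa [g1] at this
  have nEa : r 2 ≠ a := by have := hr.1.2 2 (by omega); rwa [hr4] at this
  have hLPt : r 3 ∉ Γ.Pt := Γ.npt_step (Γ.adj_symm _ _ aLa) hPa
  have hEb : r 2 ≠ b := by
    intro e
    have hLx : r 3 = x := Γ.line_unique a b (r 3) x hab hLPt hxPt
      (Γ.adj_symm _ _ aLa) (e ▸ aEL) hax (Γ.adj_symm _ _ hxb)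
    have := jE; rw [e, hLx] at this
    exact hnopp (Γ.opp_symm _ _ _ this)
  have R4 : Γ.IsStraight 4 (sq b y (r 2) (r 3) a a) := mk4 Γ _ _ _ _ _
    hby ayE aEL aLa
    hEb.symm nyL nEa
    (Γ.green y hyPt b (r 2) (Γ.adj_symm _ _ hby) ayE hEb.symm)
    jE
    (Γ.green (r 3) hLPt (r 2) a (Γ.adj_symm _ _ aEL) aLa nEa)
  exact Γ.no_common ⟨_, R4, rfl, rfl⟩ x (Γ.adj_symm _ _ hxb) hax


/-- The key contradiction: a non-straight configuration at `b` with a pair of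
lines that are opposite at `b` to different effect is impossible. -/
private lemma death (a b c x y m v : V)
    (hPa : a ∈ Γ.Pt)
    (hax : Γ.adj a x) (hbx : Γ.adj b x) (hby : Γ.adj b y) (hcy : Γ.adj c y)
    (hbm : Γ.adj b m) (hvm : Γ.adj v m)
    (hab : a ≠ b) (hbc : b ≠ c) (hxy : x ≠ y) (hvb : v ≠ b)
    (hnxy : ¬ Γ.opp b x y) (hoxm : Γ.opp b x m) (hnym : ¬ Γ.opp b y m)
    (hnocommon : ∀ t, Γ.adj a t → Γ.adj c t → False) : False := by
  have hxPt : x ∉ Γ.Pt := Γ.npt_step hax hPa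
  have hbPt : b ∈ Γ.Pt := Γ.pt_step (Γ.adj_symm _ _ hbx) hxPt
  have hyPt : y ∉ Γ.Pt := Γ.npt_step hby hbPt
  have hmPt : m ∉ Γ.Pt := Γ.npt_step hbm hbPt
  have hPc : c ∈ Γ.Pt := Γ.pt_step (Γ.adj_symm _ _ hcy) hyPt
  have hPv : v ∈ Γ.Pt := Γ.pt_step (Γ.adj_symm _ _ hvm) hmPt
  have hnOac : ¬ Γ.Opp a c := Γ.lemA a x b y c hax (Γ.adj_symm _ _ hbx) hby
    (Γ.adj_symm _ _ hcy) hab hbc hxy hPa hPc hnxy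
  have nxm : x ≠ m := Γ.ne_of_opp hoxm
  have Rav : Γ.IsStraight 4 (sq a x b m v v) := mk4 Γ _ _ _ _ _
    hax (Γ.adj_symm _ _ hbx) hbm (Γ.adj_symm _ _ hvm)
    hab nxm hvb.symm
    (Γ.green x hxPt a b (Γ.adj_symm _ _ hax) (Γ.adj_symm _ _ hbx) hab)
    hoxm
    (Γ.green m hmPt b v (Γ.adj_symm _ _ hbm) (Γ.adj_symm _ _ hvm) hvb.symm)
  have hOav : Γ.Opp a v := ⟨_, Rav, rfl, rfl⟩
  have hmy : m ≠ y := fun e => hnxy (e ▸ hoxm)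
  have hnOvc : ¬ Γ.Opp v c := Γ.lemA v m b y c hvm (Γ.adj_symm _ _ hbm) hby
    (Γ.adj_symm _ _ hcy) hvb hbc hmy hPv hPc (fun h => hnym (Γ.opp_symm _ _ _ h))
  have hno_av : ∀ t, Γ.adj a t → Γ.adj v t → False :=
    fun t h1 h2 => Γ.no_common hOav t h1 h2
  -- no line joins c and v
  have hno_cv : ∀ L, Γ.adj c L → Γ.adj v L → False := by
    intro L hcL hvL
    have Rva : Γ.IsStraight 4 (sq v m b x a a) := mk4 Γ _ _ _ _ _
      hvm (Γ.adj_symm _ _ hbm) hbx (Γ.adj_symm _ _ hax)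
      hvb nxm.symm hab.symm
      (Γ.green m hmPt v b (Γ.adj_symm _ _ hvm) (Γ.adj_symm _ _ hbm) hvb)
      (Γ.opp_symm _ _ _ hoxm)
      (Γ.green x hxPt b a (Γ.adj_symm _ _ hbx) (Γ.adj_symm _ _ hax) hab.symm)
    obtain ⟨r, hr, g0, g1, g4⟩ := Γ.F2swap Rva
      (show Γ.adj ((sq v m b x a a : ℕ → V) 0) L from hvL)
    have hr4 : r 4 = a := g4
    have aLδ : Γ.adj L (r 2) := by have := hr.1.1 1 (by omega); rwa [g1] at this
    have aδΛ : Γ.adj (r 2) (r 3) := hr.1.1 2 (by omega)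
    have aΛa : Γ.adj (r 3) a := by have := hr.1.1 3 (by omega); rwa [hr4] at this
    have jδ : Γ.opp (r 2) L (r 3) := by have := hr.2 1 (by omega); rwa [g1] at this
    have jΛ : Γ.opp (r 3) (r 2) a := by have := hr.2 2 (by omega); rwa [hr4] at this
    have nLΛ : L ≠ r 3 := by have := hr.1.2 1 (by omega); rwa [g1] at this
    have nδa : r 2 ≠ a := by have := hr.1.2 2 (by omega); rwa [hr4] at this
    have hδc : r 2 ≠ c := by
      intro e
      exact hnocommon (r 3) (Γ.adj_symm _ _ aΛa) (e ▸ aδΛ)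
    have hLPt2 : L ∉ Γ.Pt := Γ.npt_step hcL hPc
    have Rc : Γ.IsStraight 4 (sq c L (r 2) (r 3) a a) := mk4 Γ _ _ _ _ _
      hcL aLδ aδΛ aΛa
      hδc.symm nLΛ nδa
      (Γ.green L hLPt2 c (r 2) (Γ.adj_symm _ _ hcL) aLδ hδc.symm)
      jδ jΛ
    exact hnOac (Γ.opp_rev ⟨_, Rc, rfl, rfl⟩)
  obtain ⟨w, hwadj, hw1, -⟩ := Γ.plump2 v m m hvm hvm
  have hwPt : w ∉ Γ.Pt := Γ.npt_step hwadj hPv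
  have nmw : m ≠ w := (Γ.ne_of_opp hw1).symm
  have hOb : ∀ ω, Γ.adj ω w → ω ≠ v → Γ.Opp b ω := by
    intro ω h1 h2
    refine ⟨sq b m v w ω ω, mk4 Γ _ _ _ _ _
      hbm (Γ.adj_symm _ _ hvm) hwadj (Γ.adj_symm _ _ h1)
      hvb.symm nmw h2.symm
      (Γ.green m hmPt b v (Γ.adj_symm _ _ hbm) (Γ.adj_symm _ _ hvm) hvb.symm)
      (Γ.opp_symm _ _ _ hw1)
      (Γ.green w hwPt v ω (Γ.adj_symm _ _ hwadj) (Γ.adj_symm _ _ h1) h2.symm),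
      rfl, rfl⟩
  have hKc : ∀ ω, Γ.adj ω w → ω ≠ v → ∃ K, Γ.adj c K ∧ Γ.adj ω K := by
    intro ω h1 h2
    obtain ⟨p, hp, hp0, hp4⟩ := hOb ω h1 h2
    obtain ⟨r, hr, g0, g1, g4⟩ := Γ.F2swap hp
      (show Γ.adj (p 0) y by rw [hp0]; exact hby)
    have hr4 : r 4 = ω := by rw [g4, hp4]
    have ayE : Γ.adj y (r 2) := by have := hr.1.1 1 (by omega); rwa [g1] at this
    have aEK : Γ.adj (r 2) (r 3) := hr.1.1 2 (by omega)
    have aKω : Γ.adj (r 3) ω := by have := hr.1.1 3 (by omega); rwa [hr4] at this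
    by_cases hec : r 2 = c
    · exact ⟨r 3, hec ▸ aEK, Γ.adj_symm _ _ aKω⟩
    · exfalso
      have jE : Γ.opp (r 2) y (r 3) := by have := hr.2 1 (by omega); rwa [g1] at this
      have jK : Γ.opp (r 3) (r 2) ω := by have := hr.2 2 (by omega); rwa [hr4] at this
      have nyK : y ≠ r 3 := by have := hr.1.2 1 (by omega); rwa [g1] at this
      have nEω : r 2 ≠ ω := by have := hr.1.2 2 (by omega); rwa [hr4] at this
      have hcE : c ≠ r 2 := fun e => hec e.symm
      have Rc : Γ.IsStraight 4 (sq c y (r 2) (r 3) ω ω) := mk4 Γ _ _ _ _ _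
        hcy ayE aEK aKω
        hcE nyK nEω
        (Γ.green y hyPt c (r 2) (Γ.adj_symm _ _ hcy) ayE hcE)
        jE jK
      have hOcω : Γ.Opp c ω := ⟨_, Rc, rfl, rfl⟩
      obtain ⟨p2, hp2, k0, k4⟩ := Γ.opp_rev hOcω
      obtain ⟨r2, hr2, m0, m1, m4⟩ := Γ.F2swap hp2
        (show Γ.adj (p2 0) w by rw [k0]; exact h1)
      have m4' : r2 4 = c := by rw [m4, k4]
      have awP : Γ.adj w (r2 2) := by have := hr2.1.1 1 (by omega); rwa [m1] at this
      have aPY : Γ.adj (r2 2) (r2 3) := hr2.1.1 2 (by omega)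
      have aYc : Γ.adj (r2 3) c := by have := hr2.1.1 3 (by omega); rwa [m4'] at this
      have jP : Γ.opp (r2 2) w (r2 3) := by have := hr2.2 1 (by omega); rwa [m1] at this
      have jY : Γ.opp (r2 3) (r2 2) c := by have := hr2.2 2 (by omega); rwa [m4'] at this
      have nwY : w ≠ r2 3 := by have := hr2.1.2 1 (by omega); rwa [m1] at this
      have nPc : r2 2 ≠ c := by have := hr2.1.2 2 (by omega); rwa [m4'] at this
      have hPv2 : r2 2 ≠ v := by
        intro e
        exact hno_cv (r2 3) (Γ.adj_symm _ _ aYc) (e ▸ aPY)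
      have Rv : Γ.IsStraight 4 (sq v w (r2 2) (r2 3) c c) := mk4 Γ _ _ _ _ _
        hwadj awP aPY aYc
        hPv2.symm nwY nPc
        (Γ.green w hwPt v (r2 2) (Γ.adj_symm _ _ hwadj) awP hPv2.symm)
        jP jY
      exact hnOvc ⟨_, Rv, rfl, rfl⟩
  have hkill_a : ∀ ω, Γ.adj ω w → ω ≠ v → ¬ Γ.Opp a ω := by
    intro ω h1 h2 hOaω
    obtain ⟨K, hcK, hωK⟩ := hKc ω h1 h2
    obtain ⟨p3, hp3, n0, n4⟩ := Γ.opp_rev hOaω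
    obtain ⟨r3, hr3, q0, q1, q4⟩ := Γ.F2swap hp3
      (show Γ.adj (p3 0) K by rw [n0]; exact hωK)
    have q4' : r3 4 = a := by rw [q4, n4]
    have aKP : Γ.adj K (r3 2) := by have := hr3.1.1 1 (by omega); rwa [q1] at this
    have aPY : Γ.adj (r3 2) (r3 3) := hr3.1.1 2 (by omega)
    have aYa : Γ.adj (r3 3) a := by have := hr3.1.1 3 (by omega); rwa [q4'] at this
    have jP : Γ.opp (r3 2) K (r3 3) := by have := hr3.2 1 (by omega); rwa [q1] at this
    have jY : Γ.opp (r3 3) (r3 2) a := by have := hr3.2 2 (by omega); rwa [q4'] at this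
    have nKY : K ≠ r3 3 := by have := hr3.1.2 1 (by omega); rwa [q1] at this
    have nPa : r3 2 ≠ a := by have := hr3.1.2 2 (by omega); rwa [q4'] at this
    have hP'c : r3 2 ≠ c := by
      intro e
      exact hnocommon (r3 3) (Γ.adj_symm _ _ aYa) (e ▸ aPY)
    have hKPt : K ∉ Γ.Pt := Γ.npt_step hcK hPc
    have Rc2 : Γ.IsStraight 4 (sq c K (r3 2) (r3 3) a a) := mk4 Γ _ _ _ _ _
      hcK aKP aPY aYa
      hP'c.symm nKY nPa
      (Γ.green K hKPt c (r3 2) (Γ.adj_symm _ _ hcK) aKP hP'c.symm)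
      jP jY
    exact hnOac (Γ.opp_rev ⟨_, Rc2, rfl, rfl⟩)
  have hK' : ∀ ω, Γ.adj ω w → ω ≠ v → ∃ K', Γ.adj a K' ∧ Γ.adj ω K' := by
    intro ω h1 h2
    obtain ⟨p, hp, hp0, hp4⟩ := hOb ω h1 h2
    obtain ⟨r, hr, g0, g1, g4⟩ := Γ.F2swap hp
      (show Γ.adj (p 0) x by rw [hp0]; exact hbx)
    have hr4 : r 4 = ω := by rw [g4, hp4]
    have axE : Γ.adj x (r 2) := by have := hr.1.1 1 (by omega); rwa [g1] at this
    have aEK : Γ.adj (r 2) (r 3) := hr.1.1 2 (by omega)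
    have aKω : Γ.adj (r 3) ω := by have := hr.1.1 3 (by omega); rwa [hr4] at this
    by_cases hea : r 2 = a
    · exact ⟨r 3, hea ▸ aEK, Γ.adj_symm _ _ aKω⟩
    · exfalso
      have jE : Γ.opp (r 2) x (r 3) := by have := hr.2 1 (by omega); rwa [g1] at this
      have jK : Γ.opp (r 3) (r 2) ω := by have := hr.2 2 (by omega); rwa [hr4] at this
      have nxK : x ≠ r 3 := by have := hr.1.2 1 (by omega); rwa [g1] at this
      have nEω : r 2 ≠ ω := by have := hr.1.2 2 (by omega); rwa [hr4] at this
      have haE : a ≠ r 2 := fun e => hea e.symm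
      have Ra : Γ.IsStraight 4 (sq a x (r 2) (r 3) ω ω) := mk4 Γ _ _ _ _ _
        hax axE aEK aKω
        haE nxK nEω
        (Γ.green x hxPt a (r 2) (Γ.adj_symm _ _ hax) axE haE)
        jE jK
      exact hkill_a ω h1 h2 ⟨_, Ra, rfl, rfl⟩
  have hforce : ∀ ω, Γ.adj ω w → ω ≠ v → ∀ K', Γ.adj a K' → Γ.adj ω K' →
      Γ.opp ω K' w := by
    intro ω h1 h2 K' haK' hωK'
    by_contra hn
    have haω : a ≠ ω := by
      intro e
      exact hno_av w (by rw [e]; exact h1) hwadj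
    have hKw : K' ≠ w := by
      intro e
      exact hno_av w (by rw [← e]; exact haK') hwadj
    exact Γ.lemA a K' ω w v haK' (Γ.adj_symm _ _ hωK') h1 (Γ.adj_symm _ _ hwadj)
      haω h2 hKw hPa hPv hn hOav
  obtain ⟨ω1, hwω1, hoω1, -⟩ :=
    Γ.plump2 w v v (Γ.adj_symm _ _ hwadj) (Γ.adj_symm _ _ hwadj)
  have hω1w : Γ.adj ω1 w := Γ.adj_symm _ _ hwω1
  have hω1v : ω1 ≠ v := Γ.ne_of_opp hoω1
  obtain ⟨ω2, hwω2, hoω2v, hoω2ω1⟩ := Γ.plump2 w v ω1 (Γ.adj_symm _ _ hwadj) hwω1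
  have hω2w : Γ.adj ω2 w := Γ.adj_symm _ _ hwω2
  have hω2v : ω2 ≠ v := Γ.ne_of_opp hoω2v
  have hω2ω1 : ω2 ≠ ω1 := Γ.ne_of_opp hoω2ω1
  obtain ⟨K', haK', hω1K'⟩ := hK' ω1 hω1w hω1v
  have haω1 : a ≠ ω1 := by
    intro e
    exact hno_av w (by rw [e]; exact hω1w) hwadj
  have hwK' : w ≠ K' := by
    intro e
    exact hno_av w (by rw [e]; exact haK') hwadj
  have hstraight : Γ.IsStraight 4 (sq ω2 w ω1 K' a a) := mk4 Γ _ _ _ _ _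
    hω2w hwω1 hω1K' (Γ.adj_symm _ _ haK')
    hω2ω1 hwK' haω1.symm
    (Γ.green w hwPt ω2 ω1 hwω2 hwω1 hω2ω1)
    (Γ.opp_symm _ _ _ (hforce ω1 hω1w hω1v K' haK' hω1K'))
    (Γ.green K' (Γ.npt_step haK' hPa) ω1 a (Γ.adj_symm _ _ hω1K')
      (Γ.adj_symm _ _ haK') haω1.symm)
  exact hkill_a ω2 hω2w hω2v (Γ.opp_rev ⟨_, hstraight, rfl, rfl⟩)


private lemma main_iff (hflat : Γ.Flat) (a b : V) (ha : a ∈ Γ.Pt) (hb : b ∈ Γ.Pt) :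
    Γ.Opp a b ↔ Γ.DistEq a b 4 := by
  constructor
  · intro hOpp
    obtain ⟨p, hp, hp0, hp4⟩ := hOpp
    refine ⟨⟨p, hp.1, hp0, hp4⟩, ?_⟩
    intro j hj hpath
    obtain ⟨q, hq, hq0, hqj⟩ := hpath
    interval_cases j
    · -- distance 0 is impossible
      have hab : a = b := by rw [← hq0]; exact hqj
      have h3 : Γ.IsStraight 3 p := Γ.isStraight_mono (by omega) hp
      have hadj : Γ.adj a (p 3) := by
        have := hp.1.1 3 (by omega)
        rw [hp4, ← hab] at this
        exact Γ.adj_symm _ _ this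
      have h1p : Γ.IsStraight 1 (sq a (p 3) (p 3) (p 3) (p 3) (p 3)) :=
        mk1 Γ _ _ hadj
      have hvp2 := Γ.vp2 3 (by omega) (by norm_num) p 1
        (sq a (p 3) (p 3) (p 3) (p 3) (p 3)) h3 (by omega) h1p hp0.symm rfl
      omega
    · -- distance 1 is impossible (parity)
      have : Γ.adj a b := by
        have := hq.1 0 (by omega)
        rwa [hq0, hqj] at this
      exact ((Γ.part a b this).mp ha) hb
    · -- distance 2 is impossible (no common neighbour of opposites)
      have h1 : Γ.adj a (q 1) := by have := hq.1 0 (by omega); rwa [hq0] at this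
      have h2 : Γ.adj b (q 1) := by
        have := hq.1 1 (by omega)
        rw [hqj] at this
        exact Γ.adj_symm _ _ this
      exact Γ.no_common ⟨p, hp, hp0, hp4⟩ (q 1) h1 h2
    · -- distance 3 is impossible (parity)
      have e1 : Γ.adj a (q 1) := by have := hq.1 0 (by omega); rwa [hq0] at this
      have e2 : Γ.adj (q 1) (q 2) := hq.1 1 (by omega)
      have e3 : Γ.adj (q 2) b := by have := hq.1 2 (by omega); rwa [hqj] at this
      have l1 : q 1 ∉ Γ.Pt := Γ.npt_step e1 ha
      have l2 : q 2 ∈ Γ.Pt := Γ.pt_step e2 l1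
      exact (Γ.npt_step e3 l2) hb
  · intro hdist
    obtain ⟨⟨p, hpPath, hp0, hp4⟩, hmin⟩ := hdist
    have a1 : Γ.adj a (p 1) := by have := hpPath.1 0 (by omega); rwa [hp0] at this
    have a2 : Γ.adj (p 1) (p 2) := hpPath.1 1 (by omega)
    have a3 : Γ.adj (p 2) (p 3) := hpPath.1 2 (by omega)
    have a4 : Γ.adj (p 3) b := by have := hpPath.1 3 (by omega); rwa [hp4] at this
    have n02 : a ≠ p 2 := by have := hpPath.2 0 (by omega); rwa [hp0] at this
    have n13 : p 1 ≠ p 3 := hpPath.2 1 (by omega)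
    have n24 : p 2 ≠ b := by have := hpPath.2 2 (by omega); rwa [hp4] at this
    have hxPt : p 1 ∉ Γ.Pt := Γ.npt_step a1 ha
    have hbbPt : p 2 ∈ Γ.Pt := Γ.pt_step a2 hxPt
    have hyPt : p 3 ∉ Γ.Pt := Γ.npt_step a3 hbbPt
    have hanb : a ≠ b := by
      intro e
      exact hmin 0 (by omega)
        ⟨fun _ => a, ⟨fun i hi => absurd hi (by omega),
          fun i hi => absurd hi (by omega)⟩, rfl, e⟩
    have hnc : ∀ t, Γ.adj a t → Γ.adj b t → False := by
      intro t h1 h2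
      refine hmin 2 (by omega) ⟨sq a t b b b b, ⟨?_, ?_⟩, rfl, rfl⟩
      · intro i hi
        match i, hi with
        | 0, _ => exact h1
        | 1, _ => exact Γ.adj_symm _ _ h2
      · intro i hi
        match i, hi with
        | 0, _ => exact hanb
    by_cases hopp : Γ.opp (p 2) (p 1) (p 3)
    · refine ⟨p, ⟨hpPath, ?_⟩, hp0, hp4⟩
      intro i hi
      match i, hi with
      | 0, _ =>
        exact Γ.green (p 1) hxPt (p 0) (p 2)
          (Γ.adj_symm _ _ (hpPath.1 0 (by omega))) a2 (hpPath.2 0 (by omega))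
      | 1, _ => exact hopp
      | 2, _ =>
        exact Γ.green (p 3) hyPt (p 2) (p 4)
          (Γ.adj_symm _ _ a3) (hpPath.1 3 (by omega)) (hpPath.2 2 (by omega))
    · exfalso
      have hN1 : ∀ m', Γ.adj (p 2) m' → Γ.opp (p 2) (p 1) m' →
          Γ.opp (p 2) (p 3) m' := by
        intro m' hbm' hxm'
        by_contra hym'
        obtain ⟨v, hmv, hovb, -⟩ :=
          Γ.plump2 m' (p 2) (p 2) (Γ.adj_symm _ _ hbm') (Γ.adj_symm _ _ hbm')
        exact Γ.death a (p 2) b (p 1) (p 3) m' v ha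
          a1 (Γ.adj_symm _ _ a2) a3 (Γ.adj_symm _ _ a4) hbm' (Γ.adj_symm _ _ hmv)
          n02 n24 n13 (Γ.ne_of_opp hovb)
          hopp hxm' hym' hnc
      have hN2 : ∀ m', Γ.adj (p 2) m' → Γ.opp (p 2) (p 3) m' →
          Γ.opp (p 2) (p 1) m' := by
        intro m' hbm' hym'
        by_contra hxm'
        obtain ⟨v, hmv, hovb, -⟩ :=
          Γ.plump2 m' (p 2) (p 2) (Γ.adj_symm _ _ hbm') (Γ.adj_symm _ _ hbm')
        exact Γ.death b (p 2) a (p 3) (p 1) m' v hb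
          (Γ.adj_symm _ _ a4) a3 (Γ.adj_symm _ _ a2) a1 hbm' (Γ.adj_symm _ _ hmv)
          n24.symm n02.symm n13.symm (Γ.ne_of_opp hovb)
          (fun h => hopp (Γ.opp_symm _ _ _ h)) hym' hxm'
          (fun t h1 h2 => hnc t h2 h1)
      have hsub : ∀ w, Γ.Opp (p 1) w → Γ.Opp (p 3) w := by
        intro w hw
        obtain ⟨q, hq, hq0, hq4⟩ := hw
        obtain ⟨r, hr, g0, g1, g4⟩ := Γ.F2swap hq
          (show Γ.adj (q 0) (p 2) by rw [hq0]; exact a2)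
        have jb : Γ.opp (p 2) (p 1) (r 2) := by
          have := hr.2 0 (by omega)
          rwa [g1, g0, hq0] at this
        have jμ : Γ.opp (r 2) (p 2) (r 3) := by
          have := hr.2 1 (by omega); rwa [g1] at this
        have jν : Γ.opp (r 3) (r 2) w := by
          have := hr.2 2 (by omega); rwa [g4, hq4] at this
        have hbμ : Γ.adj (p 2) (r 2) := by
          have := hr.1.1 1 (by omega); rwa [g1] at this
        have aμν : Γ.adj (r 2) (r 3) := hr.1.1 2 (by omega)
        have aνw : Γ.adj (r 3) w := by
          have := hr.1.1 3 (by omega); rwa [g4, hq4] at this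
        have nbr3 : p 2 ≠ r 3 := by
          have := hr.1.2 1 (by omega); rwa [g1] at this
        have nr2w : r 2 ≠ w := by
          have := hr.1.2 2 (by omega); rwa [g4, hq4] at this
        have jb' : Γ.opp (p 2) (p 3) (r 2) := hN1 (r 2) hbμ jb
        have hstr : Γ.IsStraight 4 (sq (p 3) (p 2) (r 2) (r 3) w w) := mk4 Γ _ _ _ _ _
          (Γ.adj_symm _ _ a3) hbμ aμν aνw
          (Γ.ne_of_opp jb') nbr3 nr2w
          jb' jμ jν
        exact ⟨_, hstr, rfl, rfl⟩
      have hsub2 : ∀ w, Γ.Opp (p 3) w → Γ.Opp (p 1) w := by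
        intro w hw
        obtain ⟨q, hq, hq0, hq4⟩ := hw
        obtain ⟨r, hr, g0, g1, g4⟩ := Γ.F2swap hq
          (show Γ.adj (q 0) (p 2) by rw [hq0]; exact Γ.adj_symm _ _ a3)
        have jb : Γ.opp (p 2) (p 3) (r 2) := by
          have := hr.2 0 (by omega)
          rwa [g1, g0, hq0] at this
        have jμ : Γ.opp (r 2) (p 2) (r 3) := by
          have := hr.2 1 (by omega); rwa [g1] at this
        have jν : Γ.opp (r 3) (r 2) w := by
          have := hr.2 2 (by omega); rwa [g4, hq4] at this
        have hbμ : Γ.adj (p 2) (r 2) := by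
          have := hr.1.1 1 (by omega); rwa [g1] at this
        have aμν : Γ.adj (r 2) (r 3) := hr.1.1 2 (by omega)
        have aνw : Γ.adj (r 3) w := by
          have := hr.1.1 3 (by omega); rwa [g4, hq4] at this
        have nbr3 : p 2 ≠ r 3 := by
          have := hr.1.2 1 (by omega); rwa [g1] at this
        have nr2w : r 2 ≠ w := by
          have := hr.1.2 2 (by omega); rwa [g4, hq4] at this
        have jb' : Γ.opp (p 2) (p 1) (r 2) := hN2 (r 2) hbμ jb
        have hstr : Γ.IsStraight 4 (sq (p 1) (p 2) (r 2) (r 3) w w) := mk4 Γ _ _ _ _ _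
          a2 hbμ aμν aνw
          (Γ.ne_of_opp jb') nbr3 nr2w
          jb' jμ jν
        exact ⟨_, hstr, rfl, rfl⟩
      have heq : Γ.opSet (p 1) = Γ.opSet (p 3) :=
        Set.ext fun w => ⟨fun h => hsub w h, fun h => hsub2 w h⟩
      exact n13 (hflat (p 1) (p 3) heq)


end GreenVQ

/-- In a flat green Veldkamp quadrangle, two points are opposite iff they are
at distance 4. -/
theorem stmt11 {V : Type*} (Γ : GreenVQ V) (hflat : Γ.Flat)
    (a b : V) (ha : a ∈ Γ.Pt) (hb : b ∈ Γ.Pt) :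
    Γ.Opp a b ↔ Γ.DistEq a b 4 := by
  exact Γ.main_iff hflat a b ha hb
end

section
/- In a thick non-degenerate polar space, for every line x there exists a line y such that x^⊥ ∩ y^⊥ is a thick non-degenerate polar space and no point of x is collinear with every point of y; moreover, for such x,y, every singular plane containing x meets x^⊥ ∩ y^⊥ in exactly one point. -/
/-- A line space: a set of points together with a set of lines, each line a
set of at least two points. -/
structure LineSpace (P : Type*) where
  lines : Set (Set P)
  two_points : ∀ x ∈ lines, ∃ a b, a ∈ x ∧ b ∈ x ∧ a ≠ b

namespace LineSpace

variable {P : Type*} (S : LineSpace P)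

/-- Two points are collinear if they are equal or some line contains both. -/
def Col (a b : P) : Prop := a = b ∨ ∃ x ∈ S.lines, a ∈ x ∧ b ∈ x

/-- `Z^⊥`: the set of points collinear with every point of `Z`. -/
def perp (Z : Set P) : Set P := {a | ∀ b ∈ Z, S.Col a b}

/-- The Buekenhout-Shult axiom: for every point `a` and line `x`, either
exactly one point of `x` is collinear with `a`, or all points of `x` are. -/
def IsPolar : Prop :=
  ∀ (a : P), ∀ x ∈ S.lines, (∃! b, b ∈ x ∧ S.Col a b) ∨ ∀ b ∈ x, S.Col a b

/-- Thick: every line has at least 3 points. -/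
def Thick : Prop :=
  ∀ x ∈ S.lines, ∃ a b c, a ∈ x ∧ b ∈ x ∧ c ∈ x ∧ a ≠ b ∧ a ≠ c ∧ b ≠ c

/-- Non-degenerate: no point is collinear with all points. -/
def NonDeg : Prop := ∀ a : P, ∃ b : P, ¬ S.Col a b

/-- A subspace: every line is contained in it or meets it in at most one point. -/
def IsSubspace (X : Set P) : Prop :=
  ∀ x ∈ S.lines, x ⊆ X ∨ ∀ a ∈ x ∩ X, ∀ b ∈ x ∩ X, a = b

/-- Collinearity inside the induced subspace on `X`. -/
def ColIn (X : Set P) (a b : P) : Prop :=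
  a = b ∨ ∃ x ∈ S.lines, x ⊆ X ∧ a ∈ x ∧ b ∈ x

/-- The induced line space on `X` (with the lines contained in `X`) is a
thick non-degenerate polar space. -/
def InducedThickNonDegPolar (X : Set P) : Prop :=
  (∀ x ∈ S.lines, x ⊆ X → ∃ a b c, a ∈ x ∧ b ∈ x ∧ c ∈ x ∧ a ≠ b ∧ a ≠ c ∧ b ≠ c) ∧
  (∀ a ∈ X, ∀ x ∈ S.lines, x ⊆ X →
    (∃! b, b ∈ x ∧ S.ColIn X a b) ∨ ∀ b ∈ x, S.ColIn X a b) ∧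
  (∀ a ∈ X, ∃ b ∈ X, ¬ S.ColIn X a b)

/-- A singular plane: a singular subspace that is a projective plane, i.e. a
linear space containing at least two lines in which any two lines meet. -/
def IsSingularPlane (E : Set P) : Prop :=
  S.IsSubspace E ∧ (∀ a ∈ E, ∀ b ∈ E, S.Col a b) ∧
  (∀ a ∈ E, ∀ b ∈ E, a ≠ b → ∃ x ∈ S.lines, x ⊆ E ∧ a ∈ x ∧ b ∈ x) ∧
  (∃ x y, x ∈ S.lines ∧ y ∈ S.lines ∧ x ⊆ E ∧ y ⊆ E ∧ x ≠ y) ∧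
  (∀ x y, x ∈ S.lines → y ∈ S.lines → x ⊆ E → y ⊆ E → (x ∩ y).Nonempty)

end LineSpace

namespace LineSpace

variable {P : Type*} (S : LineSpace P)

lemma col_refl (a : P) : S.Col a a := Or.inl rfl

lemma col_symm {a b : P} (h : S.Col a b) : S.Col b a := by
  rcases h with rfl | ⟨ℓ, hℓ, h1, h2⟩
  · exact Or.inl rfl
  · exact Or.inr ⟨ℓ, hℓ, h2, h1⟩

lemma col_of_mem {ℓ : Set P} (hℓ : ℓ ∈ S.lines) {a b : P} (ha : a ∈ ℓ) (hb : b ∈ ℓ) :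
    S.Col a b := Or.inr ⟨ℓ, hℓ, ha, hb⟩

lemma exists_line {a b : P} (h : S.Col a b) (hne : a ≠ b) :
    ∃ ℓ ∈ S.lines, a ∈ ℓ ∧ b ∈ ℓ := by
  rcases h with rfl | ⟨ℓ, hℓ, h1, h2⟩
  · exact absurd rfl hne
  · exact ⟨ℓ, hℓ, h1, h2⟩

/-- If a point is collinear with two distinct points of a line, it is collinear
with every point of the line. -/
lemma all_of_two (hpol : S.IsPolar) {ℓ : Set P} (hℓ : ℓ ∈ S.lines) {a d1 d2 : P}
    (h1 : d1 ∈ ℓ) (h2 : d2 ∈ ℓ) (hne : d1 ≠ d2) (hc1 : S.Col a d1) (hc2 : S.Col a d2) :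
    ∀ c ∈ ℓ, S.Col a c := by
  rcases hpol a ℓ hℓ with ⟨w, _, hun⟩ | h
  · exact absurd ((hun d1 ⟨h1, hc1⟩).trans (hun d2 ⟨h2, hc2⟩).symm) hne
  · exact h

/-- If a point `a` fails to be collinear with some point of a line, then it is
collinear with a unique point of that line. -/
lemma pierce (hpol : S.IsPolar) {ℓ : Set P} (hℓ : ℓ ∈ S.lines) {a z : P}
    (hz : z ∈ ℓ) (hza : ¬ S.Col a z) :
    ∃ w ∈ ℓ, S.Col a w ∧ ∀ c ∈ ℓ, S.Col a c → c = w := by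
  rcases hpol a ℓ hℓ with ⟨w, ⟨hw, hcw⟩, hun⟩ | h
  · exact ⟨w, hw, hcw, fun c hc hac => hun c ⟨hc, hac⟩⟩
  · exact absurd (h z hz) hza

/-- Every point is collinear with at least one point of every line. -/
lemma exists_col (hpol : S.IsPolar) {ℓ : Set P} (hℓ : ℓ ∈ S.lines) (a : P) :
    ∃ w ∈ ℓ, S.Col a w := by
  rcases hpol a ℓ hℓ with ⟨w, ⟨hw, hcw⟩, _⟩ | h
  · exact ⟨w, hw, hcw⟩
  · obtain ⟨b, _, hb, _, _⟩ := S.two_points ℓ hℓ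
    exact ⟨b, hb, h b hb⟩

lemma mem_perp_of_two (hpol : S.IsPolar) {x : Set P} (hx : x ∈ S.lines) {c1 c2 b : P}
    (h1 : c1 ∈ x) (h2 : c2 ∈ x) (hne : c1 ≠ c2) (hb1 : S.Col b c1) (hb2 : S.Col b c2) :
    b ∈ S.perp x :=
  fun c hc => S.all_of_two hpol hx h1 h2 hne hb1 hb2 c hc

lemma perp_convex (hpol : S.IsPolar) (Z : Set P) {a b : P}
    (ha : a ∈ S.perp Z) (hb : b ∈ S.perp Z) (hne : a ≠ b) {ℓ : Set P}
    (hℓ : ℓ ∈ S.lines) (haℓ : a ∈ ℓ) (hbℓ : b ∈ ℓ) : ℓ ⊆ S.perp Z := by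
  intro z hz w hw
  exact S.col_symm (S.all_of_two hpol hℓ haℓ hbℓ hne
    (S.col_symm (ha w hw)) (S.col_symm (hb w hw)) z hz)

lemma col_of_colIn {X : Set P} {a b : P} (h : S.ColIn X a b) : S.Col a b := by
  rcases h with rfl | ⟨ℓ, hℓ, _, h1, h2⟩
  · exact S.col_refl a
  · exact S.col_of_mem hℓ h1 h2

lemma colIn_inter_perp (hpol : S.IsPolar) {Z1 Z2 : Set P} {a b : P}
    (ha : a ∈ S.perp Z1 ∩ S.perp Z2) (hb : b ∈ S.perp Z1 ∩ S.perp Z2) (h : S.Col a b) :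
    S.ColIn (S.perp Z1 ∩ S.perp Z2) a b := by
  by_cases hab : a = b
  · exact Or.inl hab
  · obtain ⟨ℓ, hℓ, haℓ, hbℓ⟩ := S.exists_line h hab
    refine Or.inr ⟨ℓ, hℓ, fun z hz => ⟨?_, ?_⟩, haℓ, hbℓ⟩
    · exact S.perp_convex hpol Z1 ha.1 hb.1 hab hℓ haℓ hbℓ hz
    · exact S.perp_convex hpol Z2 ha.2 hb.2 hab hℓ haℓ hbℓ hz

/-- Key lemma: relative non-degeneracy of the perp of a non-collinear pair,
inside a perp-convex non-degenerate set `W`. -/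
lemma residue_nondeg (hpol : S.IsPolar) (W : Set P)
    (H1 : ∀ a ∈ W, ∀ b ∈ W, S.Col a b → a ≠ b → ∃ ℓ ∈ S.lines, ℓ ⊆ W ∧ a ∈ ℓ ∧ b ∈ ℓ)
    (H2 : ∀ a ∈ W, ∃ p ∈ W, ¬ S.Col a p)
    {u v a : P} (hu : u ∈ W) (hv : v ∈ W) (huv : ¬ S.Col u v)
    (ha : a ∈ W) (hau : S.Col a u) (hav : S.Col a v) :
    ∃ b ∈ W, S.Col b u ∧ S.Col b v ∧ ¬ S.Col b a := by
  obtain ⟨p, hp, hpa⟩ := H2 a ha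
  by_cases hpu : S.Col p u
  · by_cases hpv : S.Col p v
    · exact ⟨p, hp, hpu, hpv, fun h => hpa (S.col_symm h)⟩
    · -- p ⊥ u, ¬ p ⊥ v
      have hpnu : p ≠ u := fun h => hpa (h.symm ▸ hau)
      obtain ⟨M, hM, hMW, hpM, huM⟩ := H1 p hp u hu hpu hpnu
      obtain ⟨z, hzM, hvz, _⟩ := S.pierce hpol hM huM (fun h => huv (S.col_symm h))
      have hzu : z ≠ u := fun h => huv (S.col_symm (h ▸ hvz))
      have haz : ¬ S.Col a z := by
        intro hc
        exact hpa (S.all_of_two hpol hM huM hzM (Ne.symm hzu) hau hc p hpM)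
      exact ⟨z, hMW hzM, S.col_of_mem hM hzM huM, S.col_symm hvz,
        fun h => haz (S.col_symm h)⟩
  · by_cases hpv : S.Col p v
    · -- ¬ p ⊥ u, p ⊥ v
      have hpnv : p ≠ v := fun h => hpa (h.symm ▸ hav)
      obtain ⟨M, hM, hMW, hpM, hvM⟩ := H1 p hp v hv hpv hpnv
      obtain ⟨z, hzM, huz, _⟩ := S.pierce hpol hM hvM huv
      have hzv : z ≠ v := fun h => huv (h ▸ huz)
      have haz : ¬ S.Col a z := by
        intro hc
        exact hpa (S.all_of_two hpol hM hvM hzM (Ne.symm hzv) hav hc p hpM)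
      exact ⟨z, hMW hzM, S.col_symm huz, S.col_of_mem hM hzM hvM,
        fun h => haz (S.col_symm h)⟩
    · -- ¬ p ⊥ u, ¬ p ⊥ v : the long chain
      have hau' : a ≠ u := fun h => huv (h ▸ hav)
      obtain ⟨A, hA, hAW, haA, huA⟩ := H1 a ha u hu hau hau'
      obtain ⟨w, hwA, hpw, _⟩ := S.pierce hpol hA haA (fun h => hpa (S.col_symm h))
      have hwa : w ≠ a := fun h => hpa (S.col_symm (h ▸ hpw))
      have hwu : w ≠ u := fun h => hpu (h ▸ hpw)
      have hvw : ¬ S.Col v w := by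
        intro h
        exact huv (S.col_symm
          (S.all_of_two hpol hA haA hwA (Ne.symm hwa) (S.col_symm hav) h u huA))
      have hcwu : S.Col w u := S.col_of_mem hA hwA huA
      obtain ⟨U, hU, hUW, hwU, huU⟩ := H1 w (hAW hwA) u hu hcwu hwu
      obtain ⟨s, hsU, hvs, _⟩ := S.pierce hpol hU hwU hvw
      have hsw : s ≠ w := fun h => hvw (h ▸ hvs)
      have has : S.Col a s :=
        S.all_of_two hpol hU hwU huU hwu (S.col_of_mem hA haA hwA) hau s hsU
      have hps : ¬ S.Col p s := by
        intro h
        exact hpu (S.all_of_two hpol hU hwU hsU (Ne.symm hsw) hpw h u huU)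
      have hsv : s ≠ v := fun h => huv (S.col_symm (h ▸ S.col_of_mem hU hsU huU))
      obtain ⟨V, hV, hVW, hsV, hvV⟩ := H1 s (hUW hsU) v hv (S.col_symm hvs) hsv
      obtain ⟨q, hqV, hpq, _⟩ := S.pierce hpol hV hsV hps
      have hqs : q ≠ s := fun h => hps (h ▸ hpq)
      have haq : S.Col a q := S.all_of_two hpol hV hsV hvV hsv has hav q hqV
      have huq : ¬ S.Col u q := by
        intro h
        exact huv (S.all_of_two hpol hV hsV hqV (Ne.symm hqs)
          (S.col_symm (S.col_of_mem hU hsU huU)) h v hvV)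
      have hqp : q ≠ p := fun h => hpa (h ▸ haq)
      obtain ⟨Q, hQ, hQW, hqQ, hpQ⟩ := H1 q (hVW hqV) p hp (S.col_symm hpq) hqp
      obtain ⟨e, heQ, hue, _⟩ := S.pierce hpol hQ hqQ huq
      have heq : e ≠ q := fun h => huq (h ▸ hue)
      have hae : ¬ S.Col a e := by
        intro h
        exact hpa (S.all_of_two hpol hQ hqQ heQ (Ne.symm heq) haq h p hpQ)
      have hve : ¬ S.Col v e := by
        intro h
        exact hpv (S.col_symm (S.all_of_two hpol hQ hqQ heQ (Ne.symm heq)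
          (S.col_of_mem hV hvV hqV) h p hpQ))
      have heu : e ≠ u := fun h => hae (h ▸ hau)
      obtain ⟨E1, hE1, hE1W, heE1, huE1⟩ := H1 e (hQW heQ) u hu (S.col_symm hue) heu
      obtain ⟨f, hfE1, hvf, _⟩ := S.pierce hpol hE1 heE1 hve
      have hfu : f ≠ u := fun h => huv (S.col_symm (h ▸ hvf))
      have haf : ¬ S.Col a f := by
        intro h
        exact hae (S.all_of_two hpol hE1 huE1 hfE1 (Ne.symm hfu) hau h e heE1)
      exact ⟨f, hE1W hfE1, S.col_of_mem hE1 hfE1 huE1, S.col_symm hvf,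
        fun h => haf (S.col_symm h)⟩

end LineSpace


/-- In a thick non-degenerate polar space, for every line `x` there is a line
`y` such that `x^⊥ ∩ y^⊥` is a thick non-degenerate polar space and no point
of `x` is collinear with every point of `y`; moreover, for such `x, y`, every
singular plane containing `x` meets `x^⊥ ∩ y^⊥` in exactly one point. -/
theorem stmt19 {P : Type*} (S : LineSpace P) (hpol : S.IsPolar)
    (hthick : S.Thick) (hnd : S.NonDeg) (x : Set P) (hx : x ∈ S.lines) :
    ∃ y ∈ S.lines,
      S.InducedThickNonDegPolar (S.perp x ∩ S.perp y) ∧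
      (∀ a ∈ x, a ∉ S.perp y) ∧
      ∀ E : Set P, S.IsSingularPlane E → x ⊆ E →
        ∃! c : P, c ∈ E ∩ S.perp x ∩ S.perp y := by
  classical
  -- ## Construction of the opposite line y
  obtain ⟨a0, b0, ha0, hb0, hab0⟩ := S.two_points x hx
  obtain ⟨p, hpa0⟩ := hnd a0
  obtain ⟨u, hux, hpu, hpuniq⟩ := S.pierce hpol hx ha0 (fun h => hpa0 (S.col_symm h))
  have hpnu : p ≠ u := by
    intro h
    exact hpa0 (S.col_symm (h ▸ S.col_of_mem hx hux ha0))
  obtain ⟨M, hM, hpM, huM⟩ := S.exists_line hpu hpnu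
  obtain ⟨t, hut⟩ := hnd u
  obtain ⟨m, hmM, htm, _⟩ := S.pierce hpol hM huM (fun h => hut (S.col_symm h))
  have hmu : m ≠ u := fun h => hut (S.col_symm (h ▸ htm))
  have htnm : t ≠ m := by
    intro h
    have : S.Col u m := S.col_symm (S.col_of_mem hM hmM huM)
    rw [← h] at this
    exact hut this
  obtain ⟨y, hy, hty, hmy⟩ := S.exists_line htm htnm
  -- the opposite property
  have hopp : ∀ a ∈ x, ∃ b ∈ y, ¬ S.Col a b := by
    intro a hax
    by_cases hau : a = u
    · exact ⟨t, hty, fun h => hut (hau ▸ h)⟩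
    · refine ⟨m, hmy, fun hcam => ?_⟩
      have hcau : S.Col a u := S.col_of_mem hx hax hux
      have : S.Col a p :=
        S.all_of_two hpol hM huM hmM (Ne.symm hmu) hcau hcam p hpM
      exact hau (hpuniq a hax (S.col_symm this))
  have hnotperp : ∀ a ∈ x, a ∉ S.perp y := by
    intro a hax hmem
    obtain ⟨b, hby, hnb⟩ := hopp a hax
    exact hnb (hmem b hby)
  refine ⟨y, hy, ⟨?_, ?_, ?_⟩, hnotperp, ?_⟩
  -- ## Thickness of the induced space
  · intro ℓ hℓ _
    exact hthick ℓ hℓ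
  -- ## Polar axiom in the induced space
  · intro a haX ℓ hℓ hℓX
    rcases hpol a ℓ hℓ with ⟨b, ⟨hbℓ, hab⟩, huniq⟩ | hall
    · left
      refine ⟨b, ⟨hbℓ, S.colIn_inter_perp hpol haX (hℓX hbℓ) hab⟩, ?_⟩
      intro c hc
      exact huniq c ⟨hc.1, S.col_of_colIn hc.2⟩
    · right
      intro b hbℓ
      exact S.colIn_inter_perp hpol haX (hℓX hbℓ) (hall b hbℓ)
  -- ## Non-degeneracy of the induced space
  · intro a haX
    obtain ⟨t1, ht1y, h1⟩ := hopp a0 ha0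
    obtain ⟨c2, hc2x, ht1c2, _⟩ := S.pierce hpol hx ha0 (fun h => h1 (S.col_symm h))
    obtain ⟨t2, ht2y, ha0t2, _⟩ := S.pierce hpol hy ht1y h1
    have hc2a0 : c2 ≠ a0 := fun h => h1 (S.col_symm (h ▸ ht1c2))
    have ht1t2 : t1 ≠ t2 := fun h => h1 (h ▸ ha0t2)
    have hc2t2 : ¬ S.Col c2 t2 := by
      intro h
      have hmem : c2 ∈ S.perp y :=
        S.mem_perp_of_two hpol hy ht1y ht2y ht1t2 (S.col_symm ht1c2) h
      obtain ⟨b', hb'y, hnb⟩ := hopp c2 hc2x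
      exact hnb (hmem b' hb'y)
    -- W = perp {a0, t1}
    set W : Set P := S.perp {a0, t1} with hW
    have hmemW : ∀ z : P, S.Col z a0 → S.Col z t1 → z ∈ W := by
      intro z hz1 hz2 w hw
      rcases hw with rfl | rfl
      · exact hz1
      · exact hz2
    have H1univ : ∀ α ∈ (Set.univ : Set P), ∀ β ∈ (Set.univ : Set P),
        S.Col α β → α ≠ β → ∃ ℓ ∈ S.lines, ℓ ⊆ Set.univ ∧ α ∈ ℓ ∧ β ∈ ℓ := by
      intro α _ β _ hc hne
      obtain ⟨ℓ, hℓ, h1', h2'⟩ := S.exists_line hc hne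
      exact ⟨ℓ, hℓ, Set.subset_univ ℓ, h1', h2'⟩
    have H2univ : ∀ α ∈ (Set.univ : Set P), ∃ p ∈ (Set.univ : Set P), ¬ S.Col α p := by
      intro α _
      obtain ⟨p', hp'⟩ := hnd α
      exact ⟨p', Set.mem_univ p', hp'⟩
    have H1W : ∀ α ∈ W, ∀ β ∈ W, S.Col α β → α ≠ β →
        ∃ ℓ ∈ S.lines, ℓ ⊆ W ∧ α ∈ ℓ ∧ β ∈ ℓ := by
      intro α hα β hβ hc hne
      obtain ⟨ℓ, hℓ, h1', h2'⟩ := S.exists_line hc hne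
      exact ⟨ℓ, hℓ, S.perp_convex hpol _ hα hβ hne hℓ h1' h2', h1', h2'⟩
    have H2W : ∀ α ∈ W, ∃ p ∈ W, ¬ S.Col α p := by
      intro α hα
      obtain ⟨b, _, hba0, hbt1, hbα⟩ := S.residue_nondeg hpol Set.univ H1univ H2univ
        (Set.mem_univ a0) (Set.mem_univ t1) h1 (Set.mem_univ α)
        (hα a0 (Set.mem_insert _ _)) (hα t1 (Set.mem_insert_of_mem _ rfl))
      exact ⟨b, hmemW b hba0 hbt1, fun h => hbα (S.col_symm h)⟩
    have hc2W : c2 ∈ W := hmemW c2 (S.col_of_mem hx hc2x ha0) (S.col_symm ht1c2)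
    have ht2W : t2 ∈ W := hmemW t2 (S.col_symm ha0t2) (S.col_of_mem hy ht2y ht1y)
    have haW : a ∈ W := hmemW a (haX.1 a0 ha0) (haX.2 t1 ht1y)
    obtain ⟨b, hbW, hbc2, hbt2, hba⟩ := S.residue_nondeg hpol W H1W H2W
      hc2W ht2W hc2t2 haW (haX.1 c2 hc2x) (haX.2 t2 ht2y)
    have hba0' : S.Col b a0 := hbW a0 (Set.mem_insert _ _)
    have hbt1' : S.Col b t1 := hbW t1 (Set.mem_insert_of_mem _ rfl)
    refine ⟨b, ⟨?_, ?_⟩, ?_⟩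
    · exact S.mem_perp_of_two hpol hx ha0 hc2x (Ne.symm hc2a0) hba0' hbc2
    · exact S.mem_perp_of_two hpol hy ht1y ht2y ht1t2 hbt1' hbt2
    · exact fun h => hba (S.col_symm (S.col_of_colIn h))
  -- ## Singular planes through x
  · rintro E ⟨hEsub, hEsing, hElin, ⟨m1, m2, hm1, hm2, hm1E, hm2E, hm12⟩, hEmeet⟩ hxE
    -- existence
    have hex : ∃ c : P, c ∈ E ∩ S.perp x ∩ S.perp y := by
      by_cases hrich : ∃ t ∈ y, ∃ d1 ∈ E, ∃ d2 ∈ E, d1 ≠ d2 ∧ S.Col t d1 ∧ S.Col t d2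
      · obtain ⟨t', ht'y, d1, hd1, d2, hd2, hdne, htd1, htd2⟩ := hrich
        obtain ⟨α, β, hα, hβ, hαβ⟩ := S.two_points y hy
        obtain ⟨t'', ht''y, ht''⟩ : ∃ t'' ∈ y, t'' ≠ t' := by
          by_cases h : α = t'
          · exact ⟨β, hβ, fun hh => hαβ (h ▸ hh ▸ rfl)⟩
          · exact ⟨α, hα, h⟩
        obtain ⟨ℓ1, hℓ1, hℓ1E, hd1ℓ, hd2ℓ⟩ := hElin d1 hd1 d2 hd2 hdne
        have hall : ∀ c ∈ ℓ1, S.Col t' c :=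
          S.all_of_two hpol hℓ1 hd1ℓ hd2ℓ hdne htd1 htd2
        obtain ⟨e, heℓ, ht''e⟩ := S.exists_col hpol hℓ1 t''
        have hey : e ∈ S.perp y :=
          S.mem_perp_of_two hpol hy ht'y ht''y (Ne.symm ht'')
            (S.col_symm (hall e heℓ)) (S.col_symm ht''e)
        refine ⟨e, ⟨⟨hℓ1E heℓ, ?_⟩, hey⟩⟩
        exact fun c hc => hEsing e (hℓ1E heℓ) c (hxE hc)
      · exfalso
        have hEx : ∀ e ∈ E, e ∈ x := by
          intro e he
          obtain ⟨t, hty', het⟩ := S.exists_col hpol hy e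
          obtain ⟨ct, hctx, htct⟩ := S.exists_col hpol hx t
          by_cases hect : e = ct
          · exact hect ▸ hctx
          · exact absurd ⟨t, hty', e, he, ct, hxE hctx, hect, S.col_symm het, htct⟩ hrich
        have hEeq : E = x := Set.Subset.antisymm hEx hxE
        have key : ∀ m' ∈ S.lines, m' ⊆ E → m' ≠ x → False := by
          intro m' hm' hm'E hm'x
          have hm'subx : m' ⊆ x := hEeq ▸ hm'E
          have : ∃ α ∈ x, α ∉ m' := by
            by_contra hcon
            push_neg at hcon
            exact hm'x (Set.Subset.antisymm hm'subx hcon)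
          obtain ⟨α, hαx, hαm⟩ := this
          obtain ⟨t, hty', hαt⟩ := S.exists_col hpol hy α
          obtain ⟨β, hβm, htβ⟩ := S.exists_col hpol hm' t
          have hβα : β = α := by
            by_contra hne
            exact absurd ⟨t, hty', β, hm'E hβm, α, hEeq ▸ hαx, hne, htβ, S.col_symm hαt⟩ hrich
          exact hαm (hβα ▸ hβm)
        by_cases h : m1 = x
        · exact key m2 hm2 hm2E (fun hh => hm12 (h.trans hh.symm))
        · exact key m1 hm1 hm1E h
    obtain ⟨e, he⟩ := hex
    refine ⟨e, he, ?_⟩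
    intro c hc
    by_contra hne
    obtain ⟨ℓ', hℓ', hℓ'E, hcℓ', heℓ'⟩ := hElin c hc.1.1 e he.1.1 hne
    obtain ⟨α, hαx, hαℓ⟩ := hEmeet x ℓ' hx hℓ' hxE hℓ'E
    have hαperp : α ∈ S.perp y := by
      intro b hby
      exact S.col_symm (S.all_of_two hpol hℓ' hcℓ' heℓ' hne
        (S.col_symm (hc.2 b hby)) (S.col_symm (he.2 b hby)) α hαℓ)
    exact hnotperp α hαx hαperp
end
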